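/- arXiv:2211.16454 — 6 statements merged into one kernel-verified Lean document; each statement's English description precedes it below -/
import Mathlib

section
/- Let n be a positive integer and p ∈ (0,1] with n·p ≥ 2 and p ≤ 1/3. Then for every k ∈ {0,1,…,n}, the probability that a Binomial(n,p) random variable equals k is at most e⁴/√(n·p). -/
open scoped NNReal ENNReal

set_option maxHeartbeats 1000000

/-- If `n p ≥ 2` and `p ≤ 1/3` (with `p ∈ (0,1]`), then every binomial
probability `b(k; n, p) = C(n,k) p^k (1-p)^{n-k}` is at most `e⁴ / √(n p)`. -/
theorem binomial_prob_le
    (n : ℕ) (p : ℝ) (hp0 : 0 < p) (hp1 : p ≤ 1)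
    (hnp : 2 ≤ (n : ℝ) * p) (hp3 : p ≤ 1 / 3)
    (k : ℕ) (hk : k ≤ n) :
    (n.choose k : ℝ) * p ^ k * (1 - p) ^ (n - k) ≤ Real.exp 4 / Real.sqrt ((n : ℝ) * p) := by
  set q : ℝ := 1 - p with hq_def
  have hq0 : (2:ℝ)/3 ≤ q := by rw [hq_def]; linarith
  have hqpos : (0:ℝ) < q := by linarith
  set f : ℕ → ℝ := fun j => (n.choose j : ℝ) * p ^ j * q ^ (n - j) with hf_def
  have hf_nonneg : ∀ j, 0 ≤ f j := fun j => by
    simp only [hf_def]; positivity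
  have hsum : ∑ j ∈ Finset.range (n+1), f j = 1 := by
    have hpq : p + q = 1 := by rw [hq_def]; ring
    calc ∑ j ∈ Finset.range (n+1), f j
        = ∑ j ∈ Finset.range (n+1), p ^ j * q ^ (n-j) * (n.choose j : ℝ) := by
          apply Finset.sum_congr rfl; intro j _; simp only [hf_def]; ring
      _ = (p + q) ^ n := (add_pow p q n).symm
      _ = 1 := by rw [hpq, one_pow]
  have hratio : ∀ j, j < n → ((j:ℝ)+1) * q * f (j+1) = ((n:ℝ) - j) * p * f j := by
    intro j hj
    have hchoose : (n.choose (j+1) : ℝ) * ((j:ℝ)+1) = (n.choose j : ℝ) * ((n:ℝ) - (j:ℝ)) := by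
      have h := Nat.choose_succ_right_eq n j
      have hc : ((n.choose (j+1) * (j+1) : ℕ) : ℝ) = ((n.choose j * (n - j) : ℕ) : ℝ) := by
        exact_mod_cast congrArg (fun x : ℕ => (x : ℝ)) h
      push_cast [Nat.cast_sub hj.le] at hc
      linarith [hc]
    obtain ⟨a, ha⟩ : ∃ a, n - (j+1) = a := ⟨_, rfl⟩
    have h2 : n - j = a + 1 := by omega
    simp only [hf_def, h2, ha, pow_succ]
    linear_combination (p ^ j * p * q ^ a * q) * hchoose
  have hfn : 0 < f n := by
    simp only [hf_def, Nat.sub_self, Nat.choose_self, pow_zero, Nat.cast_one]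
    positivity
  obtain ⟨m, hm_mem, hm_max⟩ :=
    Finset.exists_max_image (Finset.range (n+1)) f ⟨0, by simp⟩
  have hmn : m ≤ n := by
    have := Finset.mem_range.mp hm_mem; omega
  have hfm_pos : 0 < f m :=
    lt_of_lt_of_le hfn (hm_max n (Finset.mem_range.mpr (by omega)))
  have hm_le : (m:ℝ) ≤ (n:ℝ)*p + 1 := by
    rcases Nat.eq_zero_or_pos m with h0 | hpos
    · rw [h0]; push_cast; linarith
    · obtain ⟨j, rfl⟩ : ∃ j, m = j+1 := ⟨m-1, by omega⟩
      have hjn : j < n := by omega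
      have hr := hratio j hjn
      have hle : f j ≤ f (j+1) := hm_max j (Finset.mem_range.mpr (by omega))
      have hnj : (0:ℝ) ≤ (n:ℝ) - (j:ℝ) := by
        have : (j:ℝ) ≤ (n:ℝ) := by exact_mod_cast hjn.le
        linarith
      have h1 : ((j:ℝ)+1) * q * f (j+1) ≤ ((n:ℝ) - (j:ℝ)) * p * f (j+1) := by
        rw [hr]
        apply mul_le_mul_of_nonneg_left hle (by positivity)
      have h2 : ((j:ℝ)+1) * q ≤ ((n:ℝ) - (j:ℝ)) * p := by
        have := hfm_pos
        rcases lt_or_ge (((j:ℝ)+1) * q) (((n:ℝ) - (j:ℝ)) * p) with h | h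
        · exact h.le
        · nlinarith [h1, hfm_pos]
      rw [hq_def] at h2
      push_cast
      nlinarith [h2, hp0.le]
  have hs0 : (0:ℝ) < (n:ℝ) * p := by linarith
  have hσpos : (0:ℝ) < Real.sqrt ((n:ℝ)*p) := Real.sqrt_pos.mpr hs0
  have hfk : f k ≤ f m := hm_max k (Finset.mem_range.mpr (by omega))
  have h53 : (53:ℝ) ≤ Real.exp 4 := by
    have h1 : (2.7182818283:ℝ) < Real.exp 1 := Real.exp_one_gt_d9
    have h2 : (2.7:ℝ) ≤ Real.exp 1 := by linarith
    have h3 : Real.exp 4 = Real.exp 1 ^ (4:ℕ) := by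
      rw [← Real.exp_nat_mul]; norm_num
    have h4 : (2.7:ℝ)^(4:ℕ) ≤ Real.exp 1 ^ (4:ℕ) :=
      pow_le_pow_left₀ (by norm_num) h2 4
    rw [h3]; nlinarith [h4]
  by_cases hcase : Real.sqrt ((n:ℝ)*p) ≤ Real.exp 4
  · -- easy case
    have h1 : f k ≤ 1 := by
      have h2 := Finset.single_le_sum (f := f) (fun j _ => hf_nonneg j)
        (Finset.mem_range.mpr (show k < n+1 by omega))
      rw [hsum] at h2; exact h2
    have h3 : (1:ℝ) ≤ Real.exp 4 / Real.sqrt ((n:ℝ)*p) :=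
      (one_le_div hσpos).mpr hcase
    calc (n.choose k : ℝ) * p ^ k * q ^ (n - k) = f k := rfl
      _ ≤ 1 := h1
      _ ≤ _ := h3
  · push_neg at hcase
    set s : ℝ := (n:ℝ) * p with hs_def
    set σ : ℝ := Real.sqrt s with hσ_def
    have hσ2 : σ^2 = s := Real.sq_sqrt hs0.le
    have hσ53 : (53:ℝ) ≤ σ := by linarith
    set T : ℕ := ⌈σ⌉₊ with hT_def
    have hTσ : σ ≤ (T:ℝ) := Nat.le_ceil σ
    have hTσ' : (T:ℝ) < σ + 1 := Nat.ceil_lt_add_one (by linarith)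
    have hTpos : (0:ℝ) < (T:ℝ) := by linarith
    have hn3 : 3 * s ≤ (n:ℝ) := by
      have := mul_le_mul_of_nonneg_left hp3 (Nat.cast_nonneg n)
      rw [hs_def]; linarith
    have hmT : m + T ≤ n := by
      have hcast : (m:ℝ) + (T:ℝ) ≤ (n:ℝ) := by nlinarith [hm_le, hTσ', hσ53, hσ2, hn3]
      exact_mod_cast hcast
    -- key step inequality
    have hstep : ∀ j, m ≤ j → j + 1 ≤ m + T →
        Real.exp (-(4/(T:ℝ))) * f j ≤ f (j+1) := by
      intro j hmj hjT
      have hjn : j < n := by omega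
      have hA : (j:ℝ) + 1 ≤ s + (T:ℝ) + 1 := by
        have h1 : (j:ℝ) + 1 ≤ (m:ℝ) + (T:ℝ) := by exact_mod_cast hjT
        linarith [hm_le]
      have hC : ((n:ℝ) - (j:ℝ)) * p = s - (j:ℝ)*p := by rw [hs_def]; ring
      have e1 : ((n:ℝ) - s - (T:ℝ)) * p ≤ ((n:ℝ) - (j:ℝ)) * p :=
        mul_le_mul_of_nonneg_right (by linarith) hp0.le
      have e2 : ((n:ℝ) - s - (T:ℝ)) * p = s - s*p - (T:ℝ)*p := by
        rw [hs_def]; ring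
      have e3 : s*p ≤ s*(1/3) := mul_le_mul_of_nonneg_left hp3 hs0.le
      have e4 : (T:ℝ)*p ≤ (T:ℝ) := by nlinarith [hTpos, hp1]
      have hB' : 2/3*s - (T:ℝ) ≤ ((n:ℝ)-(j:ℝ))*p := by
        rw [e2] at e1; linarith
      have hnjp : (0:ℝ) ≤ ((n:ℝ)-(j:ℝ))*p := by nlinarith [hB', hσ2, hσ53, hTσ']
      have hB : (T:ℝ)*((T:ℝ)+1) ≤ 4*(((n:ℝ)-(j:ℝ))*p) := by
        nlinarith [hB', hTσ', hTσ, hσ53, hσ2, hTpos]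
      have hexp : 1 + 4/(T:ℝ) ≤ Real.exp (4/(T:ℝ)) := by
        have := Real.add_one_le_exp (4/(T:ℝ)); linarith
      have hnum : ((j:ℝ)+1)*q ≤ ((n:ℝ)-(j:ℝ))*p + ((T:ℝ)+1) := by
        rw [hq_def, hC]
        nlinarith [hA, hp0.le]
      have h4T : (T:ℝ)+1 ≤ (4/(T:ℝ)) * (((n:ℝ)-(j:ℝ))*p) := by
        rw [div_mul_eq_mul_div, le_div_iff₀ hTpos]
        nlinarith [hB, hTpos]
      have hKK : ((j:ℝ)+1)*q ≤ Real.exp (4/(T:ℝ)) * (((n:ℝ)-(j:ℝ))*p) := by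
        calc ((j:ℝ)+1)*q ≤ ((n:ℝ)-(j:ℝ))*p + ((T:ℝ)+1) := hnum
          _ ≤ ((n:ℝ)-(j:ℝ))*p + (4/(T:ℝ)) * (((n:ℝ)-(j:ℝ))*p) := by linarith
          _ = (1 + 4/(T:ℝ)) * (((n:ℝ)-(j:ℝ))*p) := by ring
          _ ≤ Real.exp (4/(T:ℝ)) * (((n:ℝ)-(j:ℝ))*p) :=
              mul_le_mul_of_nonneg_right hexp hnjp
      have hcancel : Real.exp (-(4/(T:ℝ))) * Real.exp (4/(T:ℝ)) = 1 := by
        rw [← Real.exp_add]; simp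
      have hK : Real.exp (-(4/(T:ℝ))) * (((j:ℝ)+1) * q) ≤ ((n:ℝ)-(j:ℝ))*p := by
        calc Real.exp (-(4/(T:ℝ))) * (((j:ℝ)+1) * q)
            ≤ Real.exp (-(4/(T:ℝ))) * (Real.exp (4/(T:ℝ)) * (((n:ℝ)-(j:ℝ))*p)) :=
              mul_le_mul_of_nonneg_left hKK (Real.exp_pos _).le
          _ = ((n:ℝ)-(j:ℝ))*p := by rw [← mul_assoc, hcancel, one_mul]
      have hjq_pos : (0:ℝ) < ((j:ℝ)+1)*q := by positivity
      have h5 : (((j:ℝ)+1)*q) * (Real.exp (-(4/(T:ℝ))) * f j)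
          ≤ (((j:ℝ)+1)*q) * f (j+1) := by
        calc (((j:ℝ)+1)*q) * (Real.exp (-(4/(T:ℝ))) * f j)
            = (Real.exp (-(4/(T:ℝ))) * (((j:ℝ)+1)*q)) * f j := by ring
          _ ≤ (((n:ℝ)-(j:ℝ))*p) * f j := mul_le_mul_of_nonneg_right hK (hf_nonneg j)
          _ = (((j:ℝ)+1)*q) * f (j+1) := (hratio j hjn).symm
      exact le_of_mul_le_mul_left h5 hjq_pos
    have hind : ∀ t, t ≤ T → Real.exp (-(4/(T:ℝ)))^t * f m ≤ f (m+t) := by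
      intro t
      induction t with
      | zero => intro _; simpa using le_refl (f m)
      | succ t ih =>
        intro ht
        have h1 := ih (by omega)
        have h2 := hstep (m+t) (by omega) (by omega)
        calc Real.exp (-(4/(T:ℝ)))^(t+1) * f m
            = Real.exp (-(4/(T:ℝ))) * (Real.exp (-(4/(T:ℝ)))^t * f m) := by ring
          _ ≤ Real.exp (-(4/(T:ℝ))) * f (m+t) :=
              mul_le_mul_of_nonneg_left h1 (Real.exp_pos _).le
          _ ≤ f (m+t+1) := h2
    have hwin : ∀ j ∈ Finset.Icc m (m+T), Real.exp (-4:ℝ) * f m ≤ f j := by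
      intro j hj
      rw [Finset.mem_Icc] at hj
      obtain ⟨t, rfl⟩ : ∃ t, j = m + t := ⟨j - m, by omega⟩
      have ht : t ≤ T := by omega
      refine le_trans ?_ (hind t ht)
      apply mul_le_mul_of_nonneg_right ?_ (hf_nonneg m)
      rw [← Real.exp_nat_mul]
      apply Real.exp_le_exp.mpr
      have htT : (t:ℝ) ≤ (T:ℝ) := by exact_mod_cast ht
      have h1 : (t:ℝ) * (4/(T:ℝ)) ≤ (T:ℝ) * (4/(T:ℝ)) :=
        mul_le_mul_of_nonneg_right htT (by positivity)
      have h2 : (T:ℝ)*(4/(T:ℝ)) = 4 := by field_simp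
      nlinarith [h1, h2]
    have hsubset : Finset.Icc m (m+T) ⊆ Finset.range (n+1) := by
      intro j hj; rw [Finset.mem_Icc] at hj; rw [Finset.mem_range]; omega
    have hsum2 : ∑ j ∈ Finset.Icc m (m+T), f j ≤ 1 := by
      rw [← hsum]
      exact Finset.sum_le_sum_of_subset_of_nonneg hsubset (fun j _ _ => hf_nonneg j)
    have hcard : (Finset.Icc m (m+T)).card = T+1 := by rw [Nat.card_Icc]; omega
    have hlow : ((T:ℝ)+1) * (Real.exp (-4:ℝ) * f m) ≤ ∑ j ∈ Finset.Icc m (m+T), f j := by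
      have h := Finset.card_nsmul_le_sum (Finset.Icc m (m+T)) f (Real.exp (-4:ℝ) * f m) hwin
      rw [hcard, nsmul_eq_mul] at h
      push_cast at h
      linarith [h]
    have hfm_le : f m ≤ Real.exp 4 / σ := by
      have hσp : (0:ℝ) < σ := by linarith
      have h7 : σ * (Real.exp (-4:ℝ) * f m) ≤ 1 := by
        have hσT : σ ≤ (T:ℝ)+1 := by linarith
        nlinarith [hlow, hsum2, hf_nonneg m, Real.exp_pos (-4:ℝ)]
      have hE : Real.exp (-4:ℝ) * Real.exp (4:ℝ) = 1 := by
        rw [← Real.exp_add]; norm_num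
      rw [le_div_iff₀ hσp]
      nlinarith [h7, Real.exp_pos (4:ℝ), hE, hf_nonneg m]
    calc (n.choose k : ℝ) * p ^ k * q ^ (n - k) = f k := rfl
      _ ≤ f m := hfk
      _ ≤ Real.exp 4 / σ := hfm_le
end

section
/- Let X, Y ~ Binomial(n,p) be independent, where n·p ≥ 2 and p ≤ 1/3. Then for any real a ≥ 0, P(|X − Y| ≤ a) ≤ (2a+1)·e⁴/√(n·p). -/
open MeasureTheory ProbabilityTheory Finset
open scoped NNReal ENNReal

/-- The binomial distribution with `n` trials and success probability `p`, as a measure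
on `ℕ`. -/
noncomputable def binomialMeasure (n : ℕ) (p : ℝ≥0) (h : p ≤ 1) : Measure ℕ :=
  ((PMF.binomial p h n).toMeasure).map Fin.val

private lemma aux_c0 (L : ℕ) (S : ℝ) (hL1 : 1 ≤ L) (hSL : 1 ≤ S - L)
    (hL2' : (2:ℕ) ≤ L → (L:ℝ)^2 ≤ S) :
    (L:ℝ) * ((3/2) * (L:ℝ) / (S - L)) ≤ 4 := by
  rw [mul_div_assoc', div_le_iff₀ (by linarith)]
  rcases le_or_gt L 1 with h | h
  · have hL1' : (L:ℝ) = 1 := by exact_mod_cast le_antisymm h hL1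
    nlinarith [hSL, hL1']
  · have h2 : (2:ℝ) ≤ (L:ℝ) := by exact_mod_cast h
    have := hL2' h
    nlinarith

private lemma aux_ratio (pr q S Kk Lr bj bj1 A : ℝ)
    (hq0 : 0 < q) (h2pr : 2 * pr ≤ q) (hpr0 : 0 < pr) (hbj : 0 ≤ bj)
    (hk1 : 1 ≤ Kk) (hkL : Kk ≤ Lr) (hSL : 1 ≤ S - Lr)
    (hmode : A ≤ S * q)
    (hid : bj1 * ((S - Kk) * q) = bj * (A + Kk * pr)) :
    bj1 ≤ bj * Real.exp ((3/2) * Lr / (S - Lr)) := by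
  have hSK : 1 ≤ S - Kk := by linarith
  have hA2 : A + Kk * pr ≤ (S + Kk/2) * q := by nlinarith
  have h1 : bj1 * ((S - Kk) * q) ≤ bj * ((S + Kk/2) * q) := by
    rw [hid]
    exact mul_le_mul_of_nonneg_left hA2 hbj
  have hbj1 : bj1 ≤ bj * ((S + Kk/2) / (S - Kk)) := by
    rw [mul_div_assoc', le_div_iff₀ (by linarith)]
    nlinarith [h1]
  have heq : (S + Kk/2) / (S - Kk) = 1 + (3/2) * Kk / (S - Kk) := by
    field_simp
    ring
  have hmono : (3/2) * Kk / (S - Kk) ≤ (3/2) * Lr / (S - Lr) := by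
    rw [div_le_div_iff₀ (by linarith) (by linarith)]
    nlinarith
  have hexp : (S + Kk/2) / (S - Kk) ≤ Real.exp ((3/2) * Lr / (S - Lr)) := by
    rw [heq]
    have := Real.add_one_le_exp ((3/2) * Lr / (S - Lr))
    linarith
  calc bj1 ≤ bj * ((S + Kk/2) / (S - Kk)) := hbj1
    _ ≤ bj * Real.exp ((3/2) * Lr / (S - Lr)) := mul_le_mul_of_nonneg_left hexp hbj

set_option maxHeartbeats 2000000 in
lemma real_binom_bound (n : ℕ) (pr : ℝ) (hp0 : 0 < pr) (hp3 : pr ≤ 1/3)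
    (hnp : 2 ≤ (n:ℝ) * pr) (t : ℕ) :
    (n.choose t : ℝ) * pr ^ t * (1 - pr) ^ (n - t)
      ≤ Real.exp 4 / Real.sqrt ((n:ℝ) * pr) := by
  set q : ℝ := 1 - pr with hqdef
  have hq : 2/3 ≤ q := by rw [hqdef]; linarith
  have hq0 : 0 < q := by linarith
  have hq1 : q < 1 := by rw [hqdef]; linarith
  set x : ℝ := (n:ℝ) * pr with hxdef
  have hx2 : 2 ≤ x := hnp
  have hsqrtpos : 0 < Real.sqrt x := Real.sqrt_pos.mpr (by linarith)
  set b : ℕ → ℝ := fun j => (n.choose j : ℝ) * pr ^ j * q ^ (n - j) with hbdef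
  have hbnonneg : ∀ j, 0 ≤ b j := by
    intro j; rw [hbdef]; positivity
  have hbpos : ∀ j, j ≤ n → 0 < b j := by
    intro j hj
    have h1 : (0:ℝ) < (n.choose j : ℝ) := by exact_mod_cast Nat.choose_pos hj
    rw [hbdef]; positivity
  have hsum : ∑ j ∈ range (n+1), b j = 1 := by
    have h := add_pow pr q n
    have hpq : pr + q = 1 := by rw [hqdef]; ring
    rw [hpq, one_pow] at h
    rw [hbdef, h]
    exact Finset.sum_congr rfl fun j hj => by ring
  -- the mode
  obtain ⟨m, hm_mem, hmax⟩ := Finset.exists_max_image (range (n+1)) b ⟨0, by simp⟩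
  have hmn : m ≤ n := by simpa [Nat.lt_succ_iff] using hm_mem
  -- ratio identity
  have hid : ∀ j, j < n → b (j+1) * (((j:ℝ)+1) * q) = b j * (((n:ℝ) - j) * pr) := by
    intro j hj
    have hch : ((n.choose (j+1) : ℝ)) * ((j:ℝ)+1) = (n.choose j : ℝ) * ((n:ℝ) - j) := by
      have h := Nat.choose_succ_right_eq n j
      have h2 : ((n.choose (j+1) * (j+1) : ℕ) : ℝ) = ((n.choose j * (n - j) : ℕ) : ℝ) := by
        exact_mod_cast congrArg (Nat.cast : ℕ → ℝ) h
      push_cast [Nat.cast_sub hj.le] at h2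
      linarith
    have hpow : q ^ (n - j) = q ^ (n - (j+1)) * q := by
      rw [← pow_succ]; congr 1; omega
    rw [hbdef]
    simp only
    rw [hpow, pow_succ]
    linear_combination (pr ^ j * pr * q ^ (n - (j+1)) * q) * hch
  -- n is positive
  have hn1 : 1 ≤ n := by
    by_contra h
    push_neg at h
    interval_cases n
    simp at hnp hxdef
    rw [hxdef] at hx2; norm_num at hx2
  -- mode inequality
  have hmode : ((n:ℝ) - m) * pr ≤ ((m:ℝ)+1) * q := by
    rcases eq_or_lt_of_le hmn with h | h
    · rw [h]; simp
      positivity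
    · have h1 := hid m h
      have h2 : b (m+1) ≤ b m := hmax (m+1) (by simp [Nat.lt_succ_iff]; omega)
      have h3 : b (m+1) * (((m:ℝ)+1) * q) ≤ b m * (((m:ℝ)+1) * q) := by
        apply mul_le_mul_of_nonneg_right h2
        positivity
      rw [h1] at h3
      have hbm := hbpos m hmn
      exact le_of_mul_le_mul_left (by linarith [h3]) hbm
  -- m ≥ 1
  have hm1 : 1 ≤ m := by
    by_contra h
    push_neg at h
    interval_cases m
    have h1 := hid 0 hn1
    have h2 : b 1 ≤ b 0 := hmax 1 (by simp; omega)
    have hb0 := hbpos 0 (by omega)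
    simp at h1
    -- b 1 * q = b 0 * (n * pr)
    nlinarith [hb0, hx2, hq1, hq0]
  -- S = m + 1 bounds
  have hS : x ≤ (m:ℝ) + 1 := by
    have : (n:ℝ) * pr - (m:ℝ) * pr ≤ ((m:ℝ)+1) * (1 - pr) := by
      rw [hqdef] at hmode; linarith [hmode]
    rw [hxdef]; nlinarith [hp0]
  obtain ⟨L, hL_le, hfl0⟩ : ∃ L : ℕ, (L:ℝ) ≤ Real.sqrt x ∧ Real.sqrt x < (L:ℝ) + 1 := by
    refine ⟨Nat.floor (Real.sqrt x), Nat.floor_le (Real.sqrt_nonneg _), ?_⟩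
    push_cast
    exact Nat.lt_floor_add_one _
  have hL1 : 1 ≤ L := by
    have h1 : (1:ℝ) ≤ Real.sqrt x := by
      nlinarith [Real.sq_sqrt (by linarith : (0:ℝ) ≤ x), Real.sqrt_nonneg x]
    by_contra h
    push_neg at h
    interval_cases L
    rw [Nat.cast_zero, zero_add] at hfl0
    linarith
  have hL2 : (L:ℝ)^2 ≤ x := by
    nlinarith [Real.sq_sqrt (by linarith : (0:ℝ) ≤ x), Real.sqrt_nonneg x]
  have hLm : L ≤ m := by
    rcases le_or_gt L 1 with h | h
    · omega
    · have h2 : (2:ℝ) ≤ (L:ℝ) := by exact_mod_cast h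
      have : (L:ℝ) ≤ (m:ℝ) := by nlinarith
      exact_mod_cast this
  set S : ℝ := (m:ℝ) + 1 with hSdef
  have hSL : 1 ≤ S - L := by
    rcases le_or_gt L 1 with h | h
    · have : (L:ℝ) ≤ 1 := by exact_mod_cast h
      rw [hSdef]; linarith
    · have h2 : (2:ℝ) ≤ (L:ℝ) := by exact_mod_cast h
      rw [hSdef]; nlinarith
  set c0 : ℝ := (3/2) * (L:ℝ) / (S - L) with hc0def
  have hc0 : 0 ≤ c0 := by
    rw [hc0def]
    apply div_nonneg (by positivity) (by linarith)
  have hLc0 : (L:ℝ) * c0 ≤ 4 := by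
    rw [hc0def]
    exact aux_c0 L S hL1 hSL (fun _ => hL2.trans (hS.trans_eq hSdef.symm))
  have hstep : ∀ k, 1 ≤ k → k ≤ L → b (m - k + 1) ≤ b (m - k) * Real.exp c0 := by
    intro k hk1 hkL
    have hkm : k ≤ m := hkL.trans hLm
    have hjlt : m - k < n := by omega
    have hcast : ((m - k : ℕ):ℝ) = (m:ℝ) - (k:ℝ) := by
      push_cast [Nat.cast_sub hkm]
      ring
    have hidk := hid (m - k) hjlt
    rw [hcast] at hidk
    rw [hc0def]
    refine aux_ratio pr q S (k:ℝ) (L:ℝ) (b (m-k)) (b (m-k+1)) (((n:ℝ) - m) * pr)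
      hq0 (by linarith) hp0 (hbnonneg _) (by exact_mod_cast hk1) (by exact_mod_cast hkL)
      hSL hmode ?_
    rw [hSdef]
    linear_combination hidk
  have hclaim : ∀ i, i ≤ L → b m ≤ b (m - i) * Real.exp ((i:ℝ) * c0) := by
    intro i
    induction i with
    | zero => intro _; simp
    | succ i ih =>
      intro hiL
      have h1 := ih (by omega)
      have h2 := hstep (i+1) (by omega) hiL
      have hmm : m - (i+1) + 1 = m - i := by omega
      rw [hmm] at h2
      calc b m ≤ b (m-i) * Real.exp ((i:ℝ)*c0) := h1
        _ ≤ (b (m-(i+1)) * Real.exp c0) * Real.exp ((i:ℝ)*c0) :=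
            mul_le_mul_of_nonneg_right h2 (Real.exp_pos _).le
        _ = b (m-(i+1)) * Real.exp (((i+1:ℕ):ℝ)*c0) := by
            rw [mul_assoc, ← Real.exp_add]
            push_cast
            ring_nf
  have hlow : ∀ i ∈ range (L+1), b m * Real.exp (-4) ≤ b (m - i) := by
    intro i hi
    rw [mem_range, Nat.lt_succ_iff] at hi
    have h1 := hclaim i hi
    have hiLr : (i:ℝ) ≤ (L:ℝ) := by exact_mod_cast hi
    have h2 : (i:ℝ)*c0 ≤ 4 := le_trans (mul_le_mul_of_nonneg_right hiLr hc0) hLc0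
    have h3 : b m ≤ b (m-i) * Real.exp 4 :=
      h1.trans (mul_le_mul_of_nonneg_left (Real.exp_le_exp.mpr h2) (hbnonneg _))
    calc b m * Real.exp (-4) ≤ (b (m-i) * Real.exp 4) * Real.exp (-4) :=
          mul_le_mul_of_nonneg_right h3 (Real.exp_pos _).le
      _ = b (m-i) := by rw [mul_assoc, ← Real.exp_add]; norm_num
  have hsum2 : ((L:ℝ)+1) * (b m * Real.exp (-4)) ≤ 1 := by
    have h1 : ∑ _i ∈ range (L+1), (b m * Real.exp (-4)) ≤ ∑ i ∈ range (L+1), b (m - i) :=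
      Finset.sum_le_sum hlow
    rw [Finset.sum_const, card_range, nsmul_eq_mul] at h1
    have h2 : ∑ i ∈ range (L+1), b (m - i) ≤ 1 := by
      rw [← hsum]
      have himg : ∑ j ∈ (range (L+1)).image (fun i => m - i), b j
          = ∑ i ∈ range (L+1), b (m - i) :=
        Finset.sum_image (fun p hp r hr hpr => by
          rw [Finset.mem_coe, mem_range, Nat.lt_succ_iff] at hp hr
          omega)
      rw [← himg]
      apply Finset.sum_le_sum_of_subset_of_nonneg
      · intro j hj
        rw [Finset.mem_image] at hj
        obtain ⟨i, hi, rfl⟩ := hj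
        rw [mem_range]
        omega
      · intro j _ _
        exact hbnonneg j
    push_cast at h1
    exact h1.trans h2
  have hbm : b m ≤ Real.exp 4 / Real.sqrt x := by
    have hfl : Real.sqrt x < (L:ℝ) + 1 := hfl0
    have h1 : b m ≤ Real.exp 4 / ((L:ℝ)+1) := by
      rw [le_div_iff₀ (by positivity)]
      have h2 : (((L:ℝ)+1) * (b m * Real.exp (-4))) * Real.exp 4 ≤ 1 * Real.exp 4 :=
        mul_le_mul_of_nonneg_right hsum2 (Real.exp_pos _).le
      calc b m * ((L:ℝ)+1) = (((L:ℝ)+1) * (b m * Real.exp (-4))) * Real.exp 4 := by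
            have hee : Real.exp (-4) * Real.exp 4 = 1 := by
              rw [← Real.exp_add]; norm_num
            linear_combination (-(((L:ℝ)+1) * b m)) * hee
        _ ≤ 1 * Real.exp 4 := h2
        _ = Real.exp 4 := one_mul _
    refine h1.trans ?_
    gcongr
  rcases le_or_gt t n with ht | ht
  · have hgoal : (n.choose t : ℝ) * pr ^ t * q ^ (n - t) = b t := rfl
    rw [hgoal]
    exact (hmax t (mem_range.mpr (by omega))).trans hbm
  · rw [Nat.choose_eq_zero_of_lt ht]
    simp only [Nat.cast_zero, zero_mul]
    positivity

private instance binomInst (n : ℕ) (p : ℝ≥0) (h : p ≤ 1) :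
    IsProbabilityMeasure (binomialMeasure n p h) := by
  unfold binomialMeasure
  exact Measure.isProbabilityMeasure_map (by measurability)

private lemma binom_singleton_le (n : ℕ) (p : ℝ≥0) (hp1 : p ≤ 1)
    (hnp : 2 ≤ (n : ℝ) * (p : ℝ)) (hp3 : (p : ℝ) ≤ 1 / 3) (t : ℕ) :
    binomialMeasure n p hp1 {t}
      ≤ ENNReal.ofReal (Real.exp 4 / Real.sqrt ((n : ℝ) * (p : ℝ))) := by
  have hp0 : 0 < (p:ℝ) := by
    rcases le_or_gt (p:ℝ) 0 with h | h
    · exfalso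
      have : (n:ℝ) * (p:ℝ) ≤ 0 := mul_nonpos_of_nonneg_of_nonpos (Nat.cast_nonneg n) h
      linarith
    · exact h
  have hreal := real_binom_bound n (p:ℝ) hp0 hp3 hnp t
  rcases le_or_gt t n with ht | ht
  · have hval : binomialMeasure n p hp1 {t}
        = (PMF.binomial p hp1 n) ⟨t, by omega⟩ := by
      unfold binomialMeasure
      rw [Measure.map_apply (by measurability) (by measurability)]
      have hpre : (Fin.val ⁻¹' {t} : Set (Fin (n+1))) = {⟨t, by omega⟩} := by
        ext i; simp [Fin.ext_iff]
      rw [hpre, PMF.toMeasure_apply_singleton _ _ (by measurability)]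
    rw [hval, PMF.binomial_apply]
    simp only [Fin.val_mk, Fin.val_last]
    have h1 : (1 : ℝ≥0∞) - (p : ℝ≥0∞) = ((1 - p : ℝ≥0) : ℝ≥0∞) := by
      rw [ENNReal.coe_sub, ENNReal.coe_one]
    rw [h1]
    have h2 : (p : ℝ≥0∞) ^ (t:ℕ) * ((1 - p : ℝ≥0) : ℝ≥0∞) ^ (n - t) * ((n.choose t : ℕ) : ℝ≥0∞)
        = (((p ^ t * (1 - p) ^ (n - t) * (n.choose t : ℝ≥0)) : ℝ≥0) : ℝ≥0∞) := by
      push_cast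
      ring
    rw [h2, ← ENNReal.ofReal_coe_nnreal]
    apply ENNReal.ofReal_le_ofReal
    push_cast
    rw [NNReal.coe_sub hp1]
    push_cast
    linarith [hreal]
  · have hval : binomialMeasure n p hp1 {t} = 0 := by
      unfold binomialMeasure
      rw [Measure.map_apply (by measurability) (by measurability)]
      have hpre : (Fin.val ⁻¹' {t} : Set (Fin (n+1))) = ∅ := by
        ext i; simp; omega
      rw [hpre]
      simp
    rw [hval]
    exact zero_le

/-- Let `X, Y ~ Binomial(n,p)` be independent, where `n p ≥ 2` and
`p ≤ 1/3`. Then for any real `a ≥ 0`, `P(|X − Y| ≤ a) ≤ (2a+1) e⁴ / √(n p)`. -/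
theorem indep_binomials_close_prob_le
    (n : ℕ) (p : ℝ≥0) (hp1 : p ≤ 1)
    (hnp : 2 ≤ (n : ℝ) * (p : ℝ)) (hp3 : (p : ℝ) ≤ 1 / 3)
    {Ω : Type*} [MeasurableSpace Ω] (μ : Measure Ω) [IsProbabilityMeasure μ]
    (X Y : Ω → ℕ)
    (hX : Measure.map X μ = binomialMeasure n p hp1)
    (hY : Measure.map Y μ = binomialMeasure n p hp1)
    (hXY : IndepFun X Y μ)
    (a : ℝ) (ha : 0 ≤ a) :
    (μ {ω | |(X ω : ℝ) - (Y ω : ℝ)| ≤ a}).toReal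
      ≤ (2 * a + 1) * Real.exp 4 / Real.sqrt ((n : ℝ) * (p : ℝ)) := by
  set M : ℝ := Real.exp 4 / Real.sqrt ((n : ℝ) * (p : ℝ)) with hMdef
  have hM0 : 0 ≤ M := by
    rw [hMdef]
    positivity
  have hXae : AEMeasurable X μ := by
    by_contra h
    rw [Measure.map_of_not_aemeasurable h] at hX
    have h2 := congrArg (fun m : Measure ℕ => m Set.univ) hX
    simp only [Measure.coe_zero, Pi.zero_apply, measure_univ] at h2
    exact zero_ne_one h2
  have hYae : AEMeasurable Y μ := by
    by_contra h
    rw [Measure.map_of_not_aemeasurable h] at hY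
    have h2 := congrArg (fun m : Measure ℕ => m Set.univ) hY
    simp only [Measure.coe_zero, Pi.zero_apply, measure_univ] at h2
    exact zero_ne_one h2
  have hXs : ∀ s : Set ℕ, μ (X ⁻¹' s) = binomialMeasure n p hp1 s := fun s => by
    rw [← hX, Measure.map_apply_of_aemeasurable hXae (by measurability)]
  have hYs : ∀ s : Set ℕ, μ (Y ⁻¹' s) = binomialMeasure n p hp1 s := fun s => by
    rw [← hY, Measure.map_apply_of_aemeasurable hYae (by measurability)]
  have hXsub : ∀ s : Set ℕ, s.Subsingleton → μ (X ⁻¹' s) ≤ ENNReal.ofReal M := by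
    intro s hs
    rcases s.eq_empty_or_nonempty with rfl | ⟨t, ht⟩
    · simp
    · have : s = {t} := hs.eq_singleton_of_mem ht
      rw [this, hXs]
      exact binom_singleton_le n p hp1 hnp hp3 t
  set N : ℕ := Nat.floor a with hNdef
  -- the inclusion
  have hsub : {ω | |(X ω : ℝ) - (Y ω : ℝ)| ≤ a}
      ⊆ ⋃ k ∈ (Finset.Icc (-(N:ℤ)) (N:ℤ)),
          ⋃ j : ℕ, ((X ⁻¹' {x : ℕ | (x:ℤ) = (j:ℤ) + k}) ∩ (Y ⁻¹' {j})) := by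
    intro ω hω
    simp only [Set.mem_setOf_eq] at hω
    have hk : ((X ω : ℤ) - (Y ω : ℤ)).natAbs ≤ N := by
      apply Nat.le_floor
      rw [Nat.cast_natAbs]
      push_cast
      exact hω
    simp only [Set.mem_iUnion]
    refine ⟨(X ω : ℤ) - (Y ω : ℤ), Finset.mem_Icc.mpr (by omega), Y ω, ?_, rfl⟩
    simp only [Set.mem_preimage, Set.mem_setOf_eq]
    ring
  have hcount : ∀ k : ℤ,
      μ (⋃ j : ℕ, ((X ⁻¹' {x : ℕ | (x:ℤ) = (j:ℤ) + k}) ∩ (Y ⁻¹' {j})))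
        ≤ ENNReal.ofReal M := by
    intro k
    refine le_trans (measure_iUnion_le _) ?_
    have hterm : ∀ j : ℕ,
        μ ((X ⁻¹' {x : ℕ | (x:ℤ) = (j:ℤ) + k}) ∩ (Y ⁻¹' {j}))
          ≤ ENNReal.ofReal M * μ (Y ⁻¹' {j}) := by
      intro j
      rw [hXY.measure_inter_preimage_eq_mul _ _ (by measurability) (by measurability)]
      apply mul_le_mul_left
      apply hXsub
      intro u hu v hv
      simp only [Set.mem_setOf_eq] at hu hv
      omega
    refine le_trans (ENNReal.tsum_le_tsum hterm) ?_
    rw [ENNReal.tsum_mul_left]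
    have hsum1 : ∑' j : ℕ, μ (Y ⁻¹' {j}) = 1 := by
      have h1 : ∀ j : ℕ, μ (Y ⁻¹' {j}) = binomialMeasure n p hp1 {j} := fun j => hYs {j}
      simp_rw [h1]
      have h2 : (⋃ j : ℕ, ({j} : Set ℕ)) = Set.univ := Set.iUnion_of_singleton ℕ
      rw [← measure_iUnion (fun i j hij => by simp [Set.disjoint_singleton, hij])
        (fun j => measurableSet_singleton j), h2, measure_univ]
    rw [hsum1, mul_one]
  -- assemble
  have hcard : (Finset.Icc (-(N:ℤ)) (N:ℤ)).card = 2*N+1 := by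
    rw [Int.card_Icc]
    omega
  have hmain : μ {ω | |(X ω : ℝ) - (Y ω : ℝ)| ≤ a}
      ≤ ENNReal.ofReal ((2*(N:ℝ)+1) * M) := by
    refine le_trans (measure_mono hsub) ?_
    refine le_trans (measure_biUnion_finset_le _ _) ?_
    refine le_trans (Finset.sum_le_sum (fun k _ => hcount k)) ?_
    rw [Finset.sum_const, hcard, nsmul_eq_mul]
    rw [← ENNReal.ofReal_natCast (2*N+1), ← ENNReal.ofReal_mul (by positivity)]
    apply ENNReal.ofReal_le_ofReal
    apply mul_le_mul_of_nonneg_right _ hM0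
    push_cast
    linarith
  have htr := ENNReal.toReal_le_of_le_ofReal (by positivity) hmain
  refine le_trans htr ?_
  have hNa : (N:ℝ) ≤ a := Nat.floor_le ha
  have h3 : (2*(N:ℝ)+1) * M ≤ (2*a+1) * M :=
    mul_le_mul_of_nonneg_right (by linarith) hM0
  refine le_trans h3 ?_
  rw [hMdef, mul_div_assoc']
end

section
/- Fix δ > 0 and a constant ε* ∈ (0,1), and let (1+δ)·log(n)/n ≤ p_n = o(n^{−5/6}). Let G ~ G(n, p_n) and fix distinct vertices u, v ∈ [n]. Define the events: E1 = {every pair of distinct vertices of G has at most 2 common neighbors}; E2 = {every vertex degree lies in [ε*·n·p_n, e·n·p_n]}; with S = {u,v} ∪ N(u) ∪ N(v), E4(u,v) = {every vertex outside S has at most 4 neighbors in N(u) ∪ N(v), and at most 5 vertices outside S have at least 2 neighbors in N(u) ∪ N(v)}. Then P(E4(u,v)^c ∩ E1 ∩ E2) = o(n^{−2}), uniformly over the choice of u and v. -/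
open MeasureTheory Filter Asymptotics
open scoped NNReal ENNReal

/-- The Erdős–Rényi measure on edge-indicator functions: each potential edge (element of
`Sym2 (Fin n)`) is present independently with probability `p` (capped at 1). -/
noncomputable def erMeasure (n : ℕ) (p : ℝ≥0) : Measure (Sym2 (Fin n) → Bool) :=
  Measure.pi fun _ => (PMF.bernoulli (min p 1) (min_le_right _ _)).toMeasure

/-- The simple graph on `Fin n` determined by an edge-indicator function. -/
def graphOfFn {n : ℕ} (ω : Sym2 (Fin n) → Bool) : SimpleGraph (Fin n) where
  Adj u v := u ≠ v ∧ ω s(u, v) = true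
  symm := ⟨fun u v h => ⟨h.1.symm, by rw [Sym2.eq_swap]; exact h.2⟩⟩
  loopless := ⟨fun u h => h.1 rfl⟩

/-- The set of vertices at graph distance at most `r` from `v`. -/
def ball {V : Type*} (G : SimpleGraph V) (v : V) (r : ℕ) : Set V :=
  {w | ∃ p : G.Walk v w, p.length ≤ r}

/-- There is a graph isomorphism between the `r`-neighborhoods of `u` and of `v`
(induced subgraphs on the balls of radius `r`) mapping `u` to `v`. -/
def RootedIso {V : Type*} (G : SimpleGraph V) (r : ℕ) (u v : V) : Prop :=
  ∃ φ : G.induce (ball G u r) ≃g G.induce (ball G v r),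
    (φ ⟨u, ⟨SimpleGraph.Walk.nil, Nat.zero_le r⟩⟩ : V) = v

/-- The degree of a vertex. -/
noncomputable def deg {V : Type*} (G : SimpleGraph V) (v : V) : ℕ := (G.neighborSet v).ncard

/-- Event `E1`: every pair of distinct vertices has at most 2 common neighbors. -/
def eventE1 {n : ℕ} (G : SimpleGraph (Fin n)) : Prop :=
  ∀ w x : Fin n, w ≠ x → (G.neighborSet w ∩ G.neighborSet x).ncard ≤ 2

/-- Event `E2`: every vertex degree lies in `[ε*·n·p, e·n·p]`. -/
def eventE2 {n : ℕ} (εs pr : ℝ) (G : SimpleGraph (Fin n)) : Prop :=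
  ∀ i : Fin n,
    εs * ((n : ℝ) * pr) ≤ (deg G i : ℝ) ∧ (deg G i : ℝ) ≤ Real.exp 1 * ((n : ℝ) * pr)

/-- The set `S = {u,v} ∪ N(u) ∪ N(v)`. -/
def bigS {n : ℕ} (G : SimpleGraph (Fin n)) (u v : Fin n) : Set (Fin n) :=
  {u, v} ∪ G.neighborSet u ∪ G.neighborSet v

/-- Event `E4(u,v)`: every vertex outside `S` has at most 4 neighbors in `N(u) ∪ N(v)`,
and at most 5 vertices outside `S` have at least 2 neighbors in `N(u) ∪ N(v)`. -/
def eventE4 {n : ℕ} (G : SimpleGraph (Fin n)) (u v : Fin n) : Prop :=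
  (∀ w : Fin n, w ∉ bigS G u v →
      (G.neighborSet w ∩ (G.neighborSet u ∪ G.neighborSet v)).ncard ≤ 4) ∧
  {w : Fin n | w ∉ bigS G u v ∧
      2 ≤ (G.neighborSet w ∩ (G.neighborSet u ∪ G.neighborSet v)).ncard}.ncard ≤ 5

/- ### Auxiliary material for the proof -/

/-- A generic bound on sums of `q ^ (size of image)` over all tuples. -/
lemma sum_pow_image_card {B β : Type*} [Fintype B] [DecidableEq β]
    (ψ : B → β) (c : ℕ) (hc : ∀ e : β, (Finset.univ.filter (fun x => ψ x = e)).card ≤ c)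
    (q : ℝ≥0∞) :
    ∀ k : ℕ, ∑ g : Fin k → B, q ^ (Finset.image (ψ ∘ g) Finset.univ).card
      ≤ (((c * k : ℕ) : ℝ≥0∞) + (Fintype.card B : ℝ≥0∞) * q) ^ k := by
  intro k
  induction k with
  | zero =>
    simp
  | succ k ih =>
    classical
    have hsum : ∑ g : Fin (k+1) → B, q ^ (Finset.image (ψ ∘ g) Finset.univ).card
        = ∑ x : B, ∑ h : Fin k → B,
            q ^ (insert (ψ x) (Finset.image (ψ ∘ h) Finset.univ)).card := by
      rw [← Equiv.sum_comp (Fin.consEquiv (fun _ => B))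
        (fun g => q ^ (Finset.image (ψ ∘ g) Finset.univ).card), Fintype.sum_prod_type]
      refine Finset.sum_congr rfl fun x _ => Finset.sum_congr rfl fun h _ => ?_
      congr 2
      have : ψ ∘ (Fin.consEquiv (fun _ => B)) (x, h) = Fin.cons (ψ x) (ψ ∘ h) :=
        Fin.comp_cons ψ x h
      rw [this]
      ext e
      simp only [Finset.mem_image, Finset.mem_univ, true_and, Finset.mem_insert]
      constructor
      · rintro ⟨j, rfl⟩
        refine Fin.cases ?_ ?_ j
        · left; simp
        · intro i; right; exact ⟨i, by simp⟩
      · rintro (rfl | ⟨i, rfl⟩)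
        · exact ⟨0, by simp⟩
        · exact ⟨i.succ, by simp⟩
    rw [hsum, Finset.sum_comm]
    have key : ∀ h : Fin k → B,
        ∑ x : B, q ^ (insert (ψ x) (Finset.image (ψ ∘ h) Finset.univ)).card
          ≤ (((c * k : ℕ) : ℝ≥0∞) + (Fintype.card B : ℝ≥0∞) * q)
              * q ^ (Finset.image (ψ ∘ h) Finset.univ).card := by
      intro h
      set T := Finset.image (ψ ∘ h) Finset.univ with hT
      have hTk : T.card ≤ k := le_trans (Finset.card_image_le) (by simp)
      rw [← Finset.sum_filter_add_sum_filter_not Finset.univ (fun x => ψ x ∈ T)]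
      have h1 : ∑ x ∈ Finset.univ.filter (fun x => ψ x ∈ T),
          q ^ (insert (ψ x) T).card ≤ ((c * k : ℕ) : ℝ≥0∞) * q ^ T.card := by
        calc ∑ x ∈ Finset.univ.filter (fun x => ψ x ∈ T), q ^ (insert (ψ x) T).card
            = ∑ x ∈ Finset.univ.filter (fun x => ψ x ∈ T), q ^ T.card := by
              refine Finset.sum_congr rfl fun x hx => ?_
              rw [Finset.insert_eq_self.2 (Finset.mem_filter.1 hx).2]
          _ = ((Finset.univ.filter (fun x => ψ x ∈ T)).card : ℝ≥0∞) * q ^ T.card := by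
              rw [Finset.sum_const, nsmul_eq_mul]
          _ ≤ ((c * k : ℕ) : ℝ≥0∞) * q ^ T.card := by
              gcongr
              norm_cast
              calc (Finset.univ.filter (fun x => ψ x ∈ T)).card
                  ≤ (T.biUnion (fun e => Finset.univ.filter (fun x => ψ x = e))).card := by
                    apply Finset.card_le_card
                    intro x hx
                    simp only [Finset.mem_biUnion, Finset.mem_filter, Finset.mem_univ,
                      true_and] at hx ⊢
                    exact ⟨ψ x, hx, rfl⟩
                _ ≤ ∑ e ∈ T, (Finset.univ.filter (fun x => ψ x = e)).card :=
                    Finset.card_biUnion_le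
                _ ≤ ∑ _e ∈ T, c := Finset.sum_le_sum fun e _ => hc e
                _ = T.card * c := by rw [Finset.sum_const, smul_eq_mul]
                _ ≤ k * c := Nat.mul_le_mul_right c hTk
                _ = c * k := Nat.mul_comm _ _
      have h2 : ∑ x ∈ Finset.univ.filter (fun x => ¬ ψ x ∈ T),
          q ^ (insert (ψ x) T).card ≤ (Fintype.card B : ℝ≥0∞) * q * q ^ T.card := by
        calc ∑ x ∈ Finset.univ.filter (fun x => ¬ ψ x ∈ T), q ^ (insert (ψ x) T).card
            = ∑ x ∈ Finset.univ.filter (fun x => ¬ ψ x ∈ T), q * q ^ T.card := by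
              refine Finset.sum_congr rfl fun x hx => ?_
              rw [Finset.card_insert_of_notMem (Finset.mem_filter.1 hx).2, pow_succ,
                mul_comm]
          _ ≤ ∑ _x : B, q * q ^ T.card := Finset.sum_le_sum_of_subset (Finset.filter_subset _ _)
          _ = (Fintype.card B : ℝ≥0∞) * q * q ^ T.card := by
              rw [Finset.sum_const, nsmul_eq_mul, Finset.card_univ, mul_assoc]
      calc _ ≤ ((c * k : ℕ) : ℝ≥0∞) * q ^ T.card + (Fintype.card B : ℝ≥0∞) * q * q ^ T.card :=
            add_le_add h1 h2
        _ = (((c * k : ℕ) : ℝ≥0∞) + (Fintype.card B : ℝ≥0∞) * q) * q ^ T.card := by ring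
    calc ∑ h : Fin k → B, ∑ x : B, q ^ (insert (ψ x) (Finset.image (ψ ∘ h) Finset.univ)).card
        ≤ ∑ h : Fin k → B, (((c * k : ℕ) : ℝ≥0∞) + (Fintype.card B : ℝ≥0∞) * q)
            * q ^ (Finset.image (ψ ∘ h) Finset.univ).card :=
          Finset.sum_le_sum fun h _ => key h
      _ = (((c * k : ℕ) : ℝ≥0∞) + (Fintype.card B : ℝ≥0∞) * q)
            * ∑ h : Fin k → B, q ^ (Finset.image (ψ ∘ h) Finset.univ).card := by
          rw [Finset.mul_sum]
      _ ≤ (((c * k : ℕ) : ℝ≥0∞) + (Fintype.card B : ℝ≥0∞) * q)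
            * (((c * k : ℕ) : ℝ≥0∞) + (Fintype.card B : ℝ≥0∞) * q) ^ k := by
          gcongr
      _ ≤ (((c * (k+1) : ℕ) : ℝ≥0∞) + (Fintype.card B : ℝ≥0∞) * q) ^ (k+1) := by
          rw [pow_succ, mul_comm]
          gcongr <;> first | omega | (norm_cast; omega)

/-- The probability that a fixed finite set of potential edges is entirely present. -/
lemma erMeasure_cyl (n : ℕ) (p : ℝ≥0) (hp : p ≤ 1) (E : Finset (Sym2 (Fin n))) :
    erMeasure n p {ω | ∀ e ∈ E, ω e = true} = (p : ℝ≥0∞) ^ E.card := by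
  classical
  have hmin : min p 1 = p := min_eq_left hp
  have hset : {ω : Sym2 (Fin n) → Bool | ∀ e ∈ E, ω e = true}
      = Set.univ.pi (fun e => if e ∈ E then ({true} : Set Bool) else Set.univ) := by
    ext ω
    simp only [Set.mem_setOf_eq, Set.mem_pi, Set.mem_univ, true_implies]
    constructor
    · intro h e
      split_ifs with he
      · exact h e he
      · trivial
    · intro h e he
      have := h e
      rw [if_pos he] at this
      exact this
  rw [erMeasure, hset, Measure.pi_pi]
  have hone : ∀ e : Sym2 (Fin n),
      (PMF.bernoulli (min p 1) (min_le_right _ _)).toMeasure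
        (if e ∈ E then ({true} : Set Bool) else Set.univ)
      = if e ∈ E then (p : ℝ≥0∞) else 1 := by
    intro e
    split_ifs with he
    · rw [PMF.toMeasure_apply_singleton _ _ (measurableSet_singleton _)]
      simp [PMF.bernoulli_apply, hmin]
    · exact measure_univ
  simp only [hone]
  rw [Finset.prod_ite_mem, Finset.univ_inter, Finset.prod_const]

/-- Index map `Fin 12 → Fin 6`. -/
def idx12 (j : Fin 12) : Fin 6 := ⟨j % 6, by omega⟩

/-- The witness edges between the six outside vertices and their two chosen neighbours. -/
def wSet {n : ℕ} (w : Fin 6 → Fin n) (σ : Fin 12 → Fin n × Bool) : Finset (Sym2 (Fin n)) :=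
  Finset.image (fun j => s(w (idx12 j), (σ j).1)) Finset.univ

/-- The witness edges connecting the chosen neighbours to `u` or `v`. -/
def mSet {n : ℕ} (u v : Fin n) (σ : Fin 12 → Fin n × Bool) : Finset (Sym2 (Fin n)) :=
  Finset.image (fun j => s((σ j).1, if (σ j).2 then u else v)) Finset.univ

/-- A configuration is valid if the `wSet` edges are distinct and disjoint from `mSet`. -/
def valid {n : ℕ} (u v : Fin n) (w : Fin 6 → Fin n) (σ : Fin 12 → Fin n × Bool) : Prop :=
  (wSet w σ).card = 12 ∧ Disjoint (wSet w σ) (mSet u v σ)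

open scoped Classical in
/-- The covering cylinder events. -/
noncomputable def cover {n : ℕ} (u v : Fin n)
    (wσ : (Fin 6 → Fin n) × (Fin 12 → Fin n × Bool)) : Set (Sym2 (Fin n) → Bool) :=
  if valid u v wσ.1 wσ.2 then {ω | ∀ e ∈ wSet wσ.1 wσ.2 ∪ mSet u v wσ.2, ω e = true} else ∅

lemma cover_measure {n : ℕ} (u v : Fin n) (p : ℝ≥0) (hp : p ≤ 1)
    (wσ : (Fin 6 → Fin n) × (Fin 12 → Fin n × Bool)) :
    erMeasure n p (cover u v wσ)
      ≤ (p : ℝ≥0∞) ^ 12 * (p : ℝ≥0∞) ^ (mSet u v wσ.2).card := by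
  classical
  rw [cover]
  split_ifs with hv
  · rw [erMeasure_cyl n p hp, Finset.card_union_of_disjoint hv.2, hv.1, pow_add]
  · simp

lemma bad_subset_cover {n : ℕ} (u v : Fin n) :
    {ω : Sym2 (Fin n) → Bool | ¬ eventE4 (graphOfFn ω) u v ∧ eventE1 (graphOfFn ω)}
      ⊆ ⋃ wσ : (Fin 6 → Fin n) × (Fin 12 → Fin n × Bool), cover u v wσ := by
  classical
  rintro ω ⟨h4, h1⟩
  set G := graphOfFn ω with hG
  have huS : u ∈ bigS G u v := by simp [bigS]
  have hvS : v ∈ bigS G u v := by simp [bigS]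
  have hNuS : G.neighborSet u ∪ G.neighborSet v ⊆ bigS G u v := by
    intro x hx
    rcases hx with hx | hx
    · exact Or.inl (Or.inr hx)
    · exact Or.inr hx
  have hA : ∀ w : Fin n, w ∉ bigS G u v →
      (G.neighborSet w ∩ (G.neighborSet u ∪ G.neighborSet v)).ncard ≤ 4 := by
    intro w hw
    have hwu : w ≠ u := fun h => hw (h ▸ huS)
    have hwv : w ≠ v := fun h => hw (h ▸ hvS)
    rw [Set.inter_union_distrib_left]
    calc (G.neighborSet w ∩ G.neighborSet u ∪ G.neighborSet w ∩ G.neighborSet v).ncard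
        ≤ (G.neighborSet w ∩ G.neighborSet u).ncard
            + (G.neighborSet w ∩ G.neighborSet v).ncard := Set.ncard_union_le _ _
      _ ≤ 2 + 2 := Nat.add_le_add (h1 w u hwu) (h1 w v hwv)
      _ ≤ 4 := le_refl _
  have hB : 6 ≤ ({w : Fin n | w ∉ bigS G u v ∧
      2 ≤ (G.neighborSet w ∩ (G.neighborSet u ∪ G.neighborSet v)).ncard} : Set (Fin n)).ncard := by
    by_contra hcon
    push_neg at hcon
    exact h4 ⟨hA, by omega⟩
  set T : Set (Fin n) := {w : Fin n | w ∉ bigS G u v ∧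
      2 ≤ (G.neighborSet w ∩ (G.neighborSet u ∪ G.neighborSet v)).ncard} with hTdef
  have hB' : 6 ≤ (Set.toFinite T).toFinset.card := by
    rwa [← Set.ncard_eq_toFinset_card T (Set.toFinite T)]
  obtain ⟨t, hts, htc⟩ := Finset.exists_subset_card_eq hB'
  set w : Fin 6 → Fin n := fun i => ((t.equivFin.symm (Fin.cast htc.symm i)) : Fin n) with hw
  have hwinj : Function.Injective w := by
    intro i i' hii
    have := Subtype.coe_injective hii
    have := t.equivFin.symm.injective this
    simpa [Fin.ext_iff] using congrArg Fin.val this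
  have hwT : ∀ i, w i ∈ T := by
    intro i
    have : w i ∈ t := (t.equivFin.symm (Fin.cast htc.symm i)).2
    exact (Set.Finite.mem_toFinset _).1 (hts this)
  have hwS : ∀ i, w i ∉ bigS G u v := fun i => (hwT i).1
  have hex : ∀ i, ∃ x y : Fin n,
      x ∈ G.neighborSet (w i) ∩ (G.neighborSet u ∪ G.neighborSet v) ∧
      y ∈ G.neighborSet (w i) ∩ (G.neighborSet u ∪ G.neighborSet v) ∧ x ≠ y := by
    intro i
    exact (Set.one_lt_ncard_iff (Set.toFinite _)).1
      (lt_of_lt_of_le Nat.one_lt_two (hwT i).2)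
  choose a b ha hb hab using hex
  set c : Fin 12 → Fin n := fun j => if (j : ℕ) < 6 then a (idx12 j) else b (idx12 j) with hc
  have hcN : ∀ j, c j ∈ G.neighborSet (w (idx12 j)) ∩
      (G.neighborSet u ∪ G.neighborSet v) := by
    intro j
    simp only [hc]
    split_ifs
    · exact ha _
    · exact hb _
  have hcW : ∀ j, G.Adj (w (idx12 j)) (c j) := fun j => (hcN j).1
  have hcS : ∀ j, c j ∈ bigS G u v := fun j => hNuS (hcN j).2
  have hroot : ∀ j, ∃ s : Bool, G.Adj (if s then u else v) (c j) := by
    intro j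
    rcases (hcN j).2 with h | h
    · exact ⟨true, h⟩
    · exact ⟨false, h⟩
  choose r hr using hroot
  set σ : Fin 12 → Fin n × Bool := fun j => (c j, r j) with hσ
  have hinj : Function.Injective (fun j : Fin 12 => s(w (idx12 j), (σ j).1)) := by
    intro j j' hjj
    simp only [hσ] at hjj
    rw [Sym2.mk_eq_mk_iff (p := (w (idx12 j), c j)) (q := (w (idx12 j'), c j'))] at hjj
    rcases hjj with hjj | hjj
    · have h1' : w (idx12 j) = w (idx12 j') := congrArg Prod.fst hjj
      have h2' : c j = c j' := congrArg Prod.snd hjj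
      have hidx : idx12 j = idx12 j' := hwinj h1'
      have hidx' : (j : ℕ) % 6 = (j' : ℕ) % 6 := by
        simpa [idx12, Fin.ext_iff] using congrArg Fin.val hidx
      by_cases hj : (j : ℕ) < 6 <;> by_cases hj' : (j' : ℕ) < 6
      · exact Fin.ext (by omega)
      · exfalso
        rw [hc] at h2'
        simp only [if_pos hj, if_neg hj'] at h2'
        rw [hidx] at h2'
        exact hab _ h2'
      · exfalso
        rw [hc] at h2'
        simp only [if_neg hj, if_pos hj'] at h2'
        rw [hidx] at h2'
        exact hab _ h2'.symm
      · have : (j : ℕ) < 12 := j.2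
        have : (j' : ℕ) < 12 := j'.2
        exact Fin.ext (by omega)
    · exfalso
      have : w (idx12 j) = c j' := congrArg Prod.fst hjj
      exact hwS _ (this ▸ hcS j')
  have hvalid : valid u v w σ := by
    constructor
    · rw [wSet, Finset.card_image_of_injective _ hinj, Finset.card_univ, Fintype.card_fin]
    · rw [Finset.disjoint_left]
      rintro e he he'
      rw [wSet, Finset.mem_image] at he
      obtain ⟨j, -, rfl⟩ := he
      rw [mSet, Finset.mem_image] at he'
      obtain ⟨j', -, hj'⟩ := he'
      have hmem : w (idx12 j) ∈ (s((σ j').1, if (σ j').2 then u else v) : Sym2 (Fin n)) := by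
        rw [hj']
        exact Sym2.mem_mk_left _ _
      rw [Sym2.mem_iff] at hmem
      rcases hmem with hmem | hmem
      · exact hwS _ (by rw [hmem]; exact hcS j')
      · split_ifs at hmem
        · exact hwS _ (by rw [hmem]; exact huS)
        · exact hwS _ (by rw [hmem]; exact hvS)
  refine Set.mem_iUnion.2 ⟨(w, σ), ?_⟩
  rw [cover, if_pos hvalid]
  intro e he
  rcases Finset.mem_union.1 he with he | he
  · rw [wSet, Finset.mem_image] at he
    obtain ⟨j, -, rfl⟩ := he
    exact (hcW j : (graphOfFn ω).Adj _ _).2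
  · rw [mSet, Finset.mem_image] at he
    obtain ⟨j, -, rfl⟩ := he
    have := (hr j : (graphOfFn ω).Adj _ _).2
    rw [Sym2.eq_swap]
    exact this

lemma mSum_bound {n : ℕ} (u v : Fin n) (p : ℝ≥0) :
    ∑ σ : Fin 12 → Fin n × Bool, (p : ℝ≥0∞) ^ (mSet u v σ).card
      ≤ (((24 : ℕ) : ℝ≥0∞) + ((n * 2 : ℕ) : ℝ≥0∞) * (p : ℝ≥0∞)) ^ 12 := by
  classical
  set ψ : Fin n × Bool → Sym2 (Fin n) := fun x => s(x.1, if x.2 then u else v) with hψ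
  have hc : ∀ e : Sym2 (Fin n), (Finset.univ.filter (fun x => ψ x = e)).card ≤ 2 := by
    intro e
    calc (Finset.univ.filter (fun x => ψ x = e)).card
        ≤ (Finset.univ : Finset Bool).card := by
          apply Finset.card_le_card_of_injOn (fun x => x.2)
            (fun x _ => Finset.mem_univ _)
          intro x hx y hy hxy
          simp only [Finset.mem_coe, Finset.mem_filter] at hx hy
          have hxe : ψ x = ψ y := hx.2.trans hy.2.symm
          rw [hψ] at hxe
          simp only at hxe
          simp only at hxy
          rw [hxy] at hxe
          rw [Sym2.mk_eq_mk_iff (p := (x.1, if y.2 then u else v)) (q := (y.1, if y.2 then u else v))] at hxe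
          simp only [Prod.swap_prod_mk, Prod.mk.injEq] at hxe
          have : x.1 = y.1 := by
            rcases hxe with ⟨h1, h2⟩ | ⟨h1, h2⟩
            · exact h1
            · exact h1.trans h2
          exact Prod.ext this hxy
      _ = 2 := by simp
  have hms : ∀ σ : Fin 12 → Fin n × Bool, mSet u v σ = Finset.image (ψ ∘ σ) Finset.univ := by
    intro σ; rfl
  calc ∑ σ : Fin 12 → Fin n × Bool, (p : ℝ≥0∞) ^ (mSet u v σ).card
      = ∑ σ : Fin 12 → Fin n × Bool, (p : ℝ≥0∞) ^ (Finset.image (ψ ∘ σ) Finset.univ).card :=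
        Finset.sum_congr rfl fun σ _ => by rw [hms]
    _ ≤ (((2 * 12 : ℕ) : ℝ≥0∞) + ((Fintype.card (Fin n × Bool) : ℕ) : ℝ≥0∞) * (p : ℝ≥0∞)) ^ 12 :=
        sum_pow_image_card ψ 2 hc _ 12
    _ = (((24 : ℕ) : ℝ≥0∞) + ((n * 2 : ℕ) : ℝ≥0∞) * (p : ℝ≥0∞)) ^ 12 := by
        norm_num [Fintype.card_prod]

lemma main_bound {n : ℕ} (u v : Fin n) (p : ℝ≥0) (hp : p ≤ 1) (εs : ℝ) :
    erMeasure n p {ω | ¬ eventE4 (graphOfFn ω) u v ∧ eventE1 (graphOfFn ω) ∧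
        eventE2 εs (p : ℝ) (graphOfFn ω)}
      ≤ ((n : ℝ≥0∞)) ^ 6 * ((p : ℝ≥0∞) ^ 12
          * ((((24 : ℕ) : ℝ≥0∞) + ((n * 2 : ℕ) : ℝ≥0∞) * (p : ℝ≥0∞)) ^ 12)) := by
  classical
  calc erMeasure n p {ω | ¬ eventE4 (graphOfFn ω) u v ∧ eventE1 (graphOfFn ω) ∧
        eventE2 εs (p : ℝ) (graphOfFn ω)}
      ≤ erMeasure n p (⋃ wσ : (Fin 6 → Fin n) × (Fin 12 → Fin n × Bool), cover u v wσ) := by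
        apply measure_mono
        refine subset_trans ?_ (bad_subset_cover u v)
        intro ω hω
        exact ⟨hω.1, hω.2.1⟩
    _ ≤ ∑' wσ : (Fin 6 → Fin n) × (Fin 12 → Fin n × Bool),
          erMeasure n p (cover u v wσ) := measure_iUnion_le _
    _ = ∑ wσ : (Fin 6 → Fin n) × (Fin 12 → Fin n × Bool),
          erMeasure n p (cover u v wσ) := tsum_fintype _
    _ ≤ ∑ wσ : (Fin 6 → Fin n) × (Fin 12 → Fin n × Bool),
          (p : ℝ≥0∞) ^ 12 * (p : ℝ≥0∞) ^ (mSet u v wσ.2).card :=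
        Finset.sum_le_sum fun wσ _ => cover_measure u v p hp wσ
    _ = ∑ w : Fin 6 → Fin n, ∑ σ : Fin 12 → Fin n × Bool,
          (p : ℝ≥0∞) ^ 12 * (p : ℝ≥0∞) ^ (mSet u v σ).card := by
        rw [Fintype.sum_prod_type]
    _ = (Fintype.card (Fin 6 → Fin n) : ℝ≥0∞)
          * ∑ σ : Fin 12 → Fin n × Bool,
              (p : ℝ≥0∞) ^ 12 * (p : ℝ≥0∞) ^ (mSet u v σ).card := by
        rw [Finset.sum_const, nsmul_eq_mul, Finset.card_univ]
    _ = ((n : ℝ≥0∞)) ^ 6 * ((p : ℝ≥0∞) ^ 12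
          * ∑ σ : Fin 12 → Fin n × Bool, (p : ℝ≥0∞) ^ (mSet u v σ).card) := by
        rw [← Finset.mul_sum, Fintype.card_fun, Fintype.card_fin, Fintype.card_fin]
        push_cast
        ring
    _ ≤ ((n : ℝ≥0∞)) ^ 6 * ((p : ℝ≥0∞) ^ 12
          * ((((24 : ℕ) : ℝ≥0∞) + ((n * 2 : ℕ) : ℝ≥0∞) * (p : ℝ≥0∞)) ^ 12)) := by
        gcongr
        exact mSum_bound u v p

/-- Fix `δ > 0` and `ε* ∈ (0,1)`, and let
`(1+δ)·log(n)/n ≤ pₙ = o(n^{−5/6})`. Then, uniformly over distinct vertices `u, v`,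
`P(E4(u,v)ᶜ ∩ E1 ∩ E2) = o(n^{−2})`. -/
theorem eventE4_complement_prob
    (δ εs : ℝ) (hδ : 0 < δ) (hεs0 : 0 < εs) (hεs1 : εs < 1)
    (p : ℕ → ℝ≥0) (hp1 : ∀ n, p n ≤ 1)
    (hlb : ∀ n : ℕ, (1 + δ) * Real.log n / n ≤ (p n : ℝ))
    (ho : (fun n : ℕ => (p n : ℝ)) =o[atTop] fun n : ℕ => (n : ℝ) ^ (-(5 : ℝ) / 6)) :
    ∃ g : ℕ → ℝ, (g =o[atTop] fun n : ℕ => (n : ℝ) ^ (-(2 : ℝ))) ∧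
      ∀ (n : ℕ) (u v : Fin n), u ≠ v →
        (erMeasure n (p n)
          {ω | ¬ eventE4 (graphOfFn ω) u v ∧ eventE1 (graphOfFn ω) ∧
              eventE2 εs (p n : ℝ) (graphOfFn ω)}).toReal ≤ g n := by
  refine ⟨fun n : ℕ => ((p n : ℝ))^12 * (n:ℝ)^6 * ((24:ℝ) + (n:ℝ)*2*(p n:ℝ))^12, ?_, ?_⟩
  · -- littleo part
    have hlog : Tendsto (fun n : ℕ => Real.log n) atTop atTop :=
      Real.tendsto_log_atTop.comp tendsto_natCast_atTop_atTop
    have h24 : ∀ᶠ n : ℕ in atTop, (24:ℝ) ≤ (n:ℝ) * (p n : ℝ) := by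
      filter_upwards [hlog.eventually_ge_atTop 24, eventually_ge_atTop 1] with n hl hn
      have hn0 : (0:ℝ) < n := by exact_mod_cast hn
      have h1 : (1 + δ) * Real.log n ≤ (p n : ℝ) * n := (div_le_iff₀ hn0).1 (hlb n)
      have h2 : Real.log n ≤ (1 + δ) * Real.log n := by nlinarith
      nlinarith
    have hO : (fun n : ℕ => ((p n : ℝ))^12 * (n:ℝ)^6 * ((24:ℝ) + (n:ℝ)*2*(p n:ℝ))^12)
        =O[atTop] fun n : ℕ => (n:ℝ)^18 * (p n : ℝ)^24 := by
      rw [isBigO_iff]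
      refine ⟨3^12, ?_⟩
      filter_upwards [h24] with n hn
      have hb : ((p n : ℝ))^12 * (n:ℝ)^6 * ((24:ℝ) + (n:ℝ)*2*(p n:ℝ))^12
          ≤ 3^12 * ((n:ℝ)^18 * (p n : ℝ)^24) := by
        have h1 : ((24:ℝ) + (n:ℝ)*2*(p n:ℝ))^12 ≤ (3*((n:ℝ)*(p n:ℝ)))^12 := by
          apply pow_le_pow_left₀ (by positivity) (by linarith)
        calc ((p n : ℝ))^12 * (n:ℝ)^6 * ((24:ℝ) + (n:ℝ)*2*(p n:ℝ))^12
            ≤ ((p n : ℝ))^12 * (n:ℝ)^6 * (3*((n:ℝ)*(p n:ℝ)))^12 := by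
              apply mul_le_mul_of_nonneg_left h1 (by positivity)
          _ = 3^12 * ((n:ℝ)^18 * (p n : ℝ)^24) := by ring
      rw [Real.norm_eq_abs, Real.norm_eq_abs, abs_of_nonneg (by positivity),
        abs_of_nonneg (by positivity)]
      exact hb
    have ho24 : (fun n : ℕ => ((p n : ℝ))^24)
        =o[atTop] fun n : ℕ => (((n:ℝ) ^ (-(5:ℝ)/6)))^24 := ho.pow (by norm_num)
    have hmul : (fun n : ℕ => (n:ℝ)^18 * ((p n : ℝ))^24)
        =o[atTop] fun n : ℕ => (n:ℝ)^18 * (((n:ℝ) ^ (-(5:ℝ)/6)))^24 :=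
      (isBigO_refl (fun n : ℕ => (n:ℝ)^18) atTop).mul_isLittleO ho24
    have heq : (fun n : ℕ => (n:ℝ)^18 * (((n:ℝ) ^ (-(5:ℝ)/6)))^24)
        =ᶠ[atTop] fun n : ℕ => (n : ℝ) ^ (-(2 : ℝ)) := by
      filter_upwards [eventually_ge_atTop 1] with n hn
      have hn0 : (0:ℝ) < n := by exact_mod_cast Nat.lt_of_lt_of_le Nat.zero_lt_one hn
      rw [← Real.rpow_natCast ((n:ℝ) ^ (-(5:ℝ)/6)) 24, ← Real.rpow_mul hn0.le,
        ← Real.rpow_natCast (n:ℝ) 18, ← Real.rpow_add hn0]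
      norm_num
    exact hO.trans_isLittleO (hmul.congr' EventuallyEq.rfl heq)
  · -- per-n bound
    intro n u v huv
    have hle := main_bound u v (p n) (hp1 n) εs
    set R : ℝ≥0∞ := ((n : ℝ≥0∞)) ^ 6 * ((p n : ℝ≥0∞) ^ 12
        * ((((24 : ℕ) : ℝ≥0∞) + ((n * 2 : ℕ) : ℝ≥0∞) * ((p n : ℝ≥0)    : ℝ≥0∞)) ^ 12)) with hR
    have hRfin : R ≠ ∞ := by
      rw [hR]
      exact ENNReal.mul_ne_top (ENNReal.pow_ne_top (ENNReal.natCast_ne_top n))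
        (ENNReal.mul_ne_top (ENNReal.pow_ne_top ENNReal.coe_ne_top)
          (ENNReal.pow_ne_top (ENNReal.add_ne_top.2 ⟨ENNReal.natCast_ne_top _,
            ENNReal.mul_ne_top (ENNReal.natCast_ne_top _) ENNReal.coe_ne_top⟩)))
    have h1 : (erMeasure n (p n)
        {ω | ¬ eventE4 (graphOfFn ω) u v ∧ eventE1 (graphOfFn ω) ∧
            eventE2 εs (p n : ℝ) (graphOfFn ω)}).toReal ≤ R.toReal :=
      ENNReal.toReal_mono hRfin hle
    refine h1.trans (le_of_eq ?_)
    rw [hR]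
    rw [ENNReal.toReal_mul, ENNReal.toReal_mul, ENNReal.toReal_pow, ENNReal.toReal_pow,
      ENNReal.toReal_pow, ENNReal.toReal_add (by finiteness) (by finiteness),
      ENNReal.toReal_mul]
    simp only [ENNReal.toReal_natCast, ENNReal.coe_toReal]
    push_cast
    ring
end

section
/- Suppose p_n → 0 and n·p_n → ∞, and let G ~ G(n, p_n). Then for any fixed positive integer m and every k ∈ {0,…,m−1}, E[|C_G(m,k)|] = (1 ± o(1))·n/m, i.e., E[|C_G(m,k)|]/(n/m) → 1 as n → ∞. -/
open MeasureTheory Filter Asymptotics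
open scoped NNReal ENNReal

/-- The color class `C_G(m,k)`: vertices whose degree is `k` mod `m`. -/
noncomputable def colorClass {V : Type*} (G : SimpleGraph V) (m k : ℕ) : Set V :=
  {v | deg G v % m = k}

open Finset Complex
open scoped Real

namespace CCAux

/-- weight of a Bernoulli outcome -/
def W (q : ℝ) (b : Bool) : ℝ := if b then q else 1 - q

/-- probability that Bin(N,q) ≡ k (mod m), written as a sum over Boolean vectors -/
noncomputable def T (m k N : ℕ) (q : ℝ) : ℝ :=
  ∑ σ : Fin N → Bool,
    (if (univ.filter fun i => σ i = true).card % m = k then (1:ℝ) else 0) * ∏ i, W q (σ i)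

lemma sum_eq_T (m k : ℕ) (ι : Type*) [Fintype ι] [DecidableEq ι] (q : ℝ) :
    ∑ σ : ι → Bool,
      (if (univ.filter fun i => σ i = true).card % m = k then (1:ℝ) else 0) * ∏ i, W q (σ i)
    = T m k (Fintype.card ι) q := by
  classical
  let e := Fintype.equivFin ι
  refine Fintype.sum_equiv (Equiv.arrowCongr e (Equiv.refl Bool)) _ _ fun σ => ?_
  have hcard : (univ.filter fun i : ι => σ i = true).card
      = (univ.filter fun x : Fin (Fintype.card ι) =>
          (Equiv.arrowCongr e (Equiv.refl Bool) σ) x = true).card := by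
    refine Finset.card_bij (fun i _ => e i) ?_ ?_ ?_
    · intro a ha
      simp only [mem_filter, mem_univ, true_and] at ha ⊢
      simpa [Equiv.arrowCongr] using ha
    · intro a _ b _ h; exact e.injective h
    · intro x hx
      refine ⟨e.symm x, ?_, by simp⟩
      simp only [mem_filter, mem_univ, true_and] at hx ⊢
      simpa [Equiv.arrowCongr] using hx
  have hprod : ∏ i : ι, W q (σ i)
      = ∏ x : Fin (Fintype.card ι), W q ((Equiv.arrowCongr e (Equiv.refl Bool) σ) x) := by
    rw [← Equiv.prod_comp e (fun x => W q ((Equiv.arrowCongr e (Equiv.refl Bool) σ) x))]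
    refine Finset.prod_congr rfl fun i _ => ?_
    simp [Equiv.arrowCongr]
  rw [hcard, hprod]


noncomputable def zeta (m : ℕ) : ℂ := Complex.exp ((2 * π / m : ℝ) * Complex.I)

lemma zeta_ne_zero (m : ℕ) : zeta m ≠ 0 := Complex.exp_ne_zero _

lemma zeta_pow (m a : ℕ) : zeta m ^ a = Complex.exp ((2 * π * a / m : ℝ) * Complex.I) := by
  rw [zeta, ← Complex.exp_nat_mul]
  congr 1
  push_cast
  ring

lemma zeta_pow_m (m : ℕ) (hm : 0 < m) : zeta m ^ m = 1 := by
  rw [zeta_pow]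
  have : (2 * π * m / m : ℝ) = 2 * π := by
    field_simp
  rw [this]
  simpa [mul_comm] using Complex.exp_two_pi_mul_I

lemma zeta_pow_ne_one (m : ℕ) {a : ℕ} (ha : 0 < a) (ham : a < m) : zeta m ^ a ≠ 1 := by
  have hm : 0 < m := ha.trans ham
  rw [zeta_pow]
  intro h
  rw [Complex.exp_eq_one_iff] at h
  obtain ⟨t, ht⟩ := h
  have hI : ((2 * π * a / m : ℝ) : ℂ) = (t : ℂ) * (2 * π) := by
    rw [show ((t:ℂ)) * (2 * ↑π * Complex.I) = ((t:ℂ) * (2 * ↑π)) * Complex.I by ring] at ht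
    exact mul_right_cancel₀ Complex.I_ne_zero ht
  have hreal : (2 * π * a / m : ℝ) = (t : ℝ) * (2 * π) := by
    exact_mod_cast hI
  have hπ : (0:ℝ) < π := Real.pi_pos
  have hm' : (0:ℝ) < m := by exact_mod_cast hm
  have hta : (a : ℝ) = (t : ℝ) * m := by
    field_simp at hreal
    nlinarith [hreal]
  have ht0 : (0:ℝ) < (t:ℝ) := by
    have ha' : (0:ℝ) < a := by exact_mod_cast ha
    nlinarith
  have ht1 : (1:ℤ) ≤ t := by exact_mod_cast ht0
  have : (m:ℝ) ≤ (t:ℝ) * m := by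
    have : (1:ℝ) ≤ (t:ℝ) := by exact_mod_cast ht1
    nlinarith
  have ham' : (a:ℝ) < m := by exact_mod_cast ham
  linarith [hta ▸ this]

lemma root_sum (m k : ℕ) (hm : 0 < m) (hk : k < m) (d : ℕ) :
    ∑ j ∈ Finset.range m, zeta m ^ (j * d) * (zeta m ^ (j * k))⁻¹
      = if d % m = k then (m : ℂ) else 0 := by
  have hpow : ∀ j, zeta m ^ (j * d) * (zeta m ^ (j * k))⁻¹
      = (zeta m ^ d * (zeta m ^ k)⁻¹) ^ j := by
    intro j
    rw [mul_pow, inv_pow, ← pow_mul, ← pow_mul, Nat.mul_comm d j, Nat.mul_comm k j]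
  simp_rw [hpow]
  have hzd : zeta m ^ d = zeta m ^ (d % m) := by
    conv_lhs => rw [← Nat.mod_add_div d m, pow_add, pow_mul, zeta_pow_m m hm, one_pow, mul_one]
  by_cases hdk : d % m = k
  · simp only [hdk, if_pos, hzd, hdk]
    rw [mul_inv_cancel₀ (pow_ne_zero _ (zeta_ne_zero m))]
    simp
  · rw [if_neg hdk]
    have hrm : (zeta m ^ d * (zeta m ^ k)⁻¹) ^ m = 1 := by
      rw [mul_pow, inv_pow, ← pow_mul, ← pow_mul, Nat.mul_comm d m, Nat.mul_comm k m,
        pow_mul, pow_mul, zeta_pow_m m hm, one_pow, one_pow, inv_one, mul_one]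
    have hr1 : zeta m ^ d * (zeta m ^ k)⁻¹ ≠ 1 := by
      rw [hzd]
      intro h
      have h' : zeta m ^ (d % m) = zeta m ^ k :=
        (mul_inv_eq_one₀ (pow_ne_zero _ (zeta_ne_zero m))).1 h
      rcases lt_trichotomy (d % m) k with hlt | heq | hgt
      · have : zeta m ^ (k - (d % m)) = 1 := by
          have := h'.symm
          have hk' : k = (k - (d % m)) + (d % m) := by omega
          rw [hk', pow_add] at this
          have := mul_right_cancel₀ (pow_ne_zero _ (zeta_ne_zero m)) (this.trans (one_mul _).symm)
          exact this
        exact zeta_pow_ne_one m (by omega) (by omega) this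
      · exact hdk heq
      · have : zeta m ^ (d % m - k) = 1 := by
          have hk' : d % m = (d % m - k) + k := by omega
          rw [hk', pow_add] at h'
          have := mul_right_cancel₀ (pow_ne_zero _ (zeta_ne_zero m)) (h'.trans (one_mul _).symm)
          exact this
        have hdm : d % m < m := Nat.mod_lt _ hm
        exact zeta_pow_ne_one m (by omega) (by omega) this
    rw [geom_sum_eq hr1, hrm, sub_self, zero_div]


lemma binom (m N j : ℕ) (q : ℝ) :
    ∑ σ : Fin N → Bool,
      zeta m ^ (j * (univ.filter fun i => σ i = true).card) * ∏ i, ((W q (σ i) : ℝ) : ℂ)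
    = ((1 - q : ℂ) + q * zeta m ^ j) ^ N := by
  have key : ∀ σ : Fin N → Bool,
      zeta m ^ (j * (univ.filter fun i => σ i = true).card) * ∏ i, ((W q (σ i) : ℝ) : ℂ)
      = ∏ i, ((zeta m ^ j) ^ (if σ i = true then 1 else 0) * ((W q (σ i) : ℝ) : ℂ)) := by
    intro σ
    rw [Finset.prod_mul_distrib, Finset.prod_pow_eq_pow_sum, ← Finset.card_filter, pow_mul]
  simp_rw [key]
  rw [← Fintype.piFinset_univ, ← Finset.prod_univ_sum (fun _ : Fin N => (univ : Finset Bool))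
    (fun i b => ((zeta m ^ j) ^ (if b = true then 1 else 0)) * ((W q b : ℝ) : ℂ))]
  have : ∀ i : Fin N, (∑ b : Bool, (zeta m ^ j) ^ (if b = true then 1 else 0) * ((W q b : ℝ) : ℂ))
      = ((1 - q : ℂ) + q * zeta m ^ j) := by
    intro i
    rw [Fintype.sum_bool]
    simp [W]
    ring
  rw [Finset.prod_congr rfl fun i _ => this i, Finset.prod_const, Finset.card_univ,
    Fintype.card_fin]

lemma mT_eq (m k : ℕ) (hm : 0 < m) (hk : k < m) (N : ℕ) (q : ℝ) :
    (m : ℂ) * ((T m k N q : ℝ) : ℂ)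
      = ∑ j ∈ Finset.range m, (zeta m ^ (j * k))⁻¹ * ((1 - q : ℂ) + q * zeta m ^ j) ^ N := by
  have hT : ((T m k N q : ℝ) : ℂ) = ∑ σ : Fin N → Bool,
      (if (univ.filter fun i => σ i = true).card % m = k then (1:ℂ) else 0) *
        ∏ i, ((W q (σ i) : ℝ) : ℂ) := by
    rw [T]
    push_cast [apply_ite (fun x : ℝ => (x : ℂ))]
    rfl
  rw [hT, Finset.mul_sum]
  have step : ∀ σ : Fin N → Bool,
      (m:ℂ) * ((if (univ.filter fun i => σ i = true).card % m = k then (1:ℂ) else 0) *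
          ∏ i, ((W q (σ i) : ℝ) : ℂ))
      = ∑ j ∈ Finset.range m, (zeta m ^ (j * k))⁻¹ *
          (zeta m ^ (j * (univ.filter fun i => σ i = true).card) * ∏ i, ((W q (σ i) : ℝ) : ℂ)) := by
    intro σ
    have h1 : (m:ℂ) * ((if (univ.filter fun i => σ i = true).card % m = k then (1:ℂ) else 0) *
          ∏ i, ((W q (σ i) : ℝ) : ℂ))
        = (if (univ.filter fun i => σ i = true).card % m = k then (m:ℂ) else 0) *
          ∏ i, ((W q (σ i) : ℝ) : ℂ) := by
      split_ifs <;> ring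
    rw [h1, ← root_sum m k hm hk, Finset.sum_mul]
    exact Finset.sum_congr rfl fun j _ => by ring
  rw [Finset.sum_congr rfl fun σ _ => step σ, Finset.sum_comm]
  refine Finset.sum_congr rfl fun j _ => ?_
  rw [← Finset.mul_sum, binom m N j q]

lemma abs_mT_sub_one_le (m k : ℕ) (hm : 0 < m) (hk : k < m) (N : ℕ) (q : ℝ) :
    |(m : ℝ) * T m k N q - 1|
      ≤ ∑ j ∈ Finset.Ico 1 m, ‖(1 - q : ℂ) + q * zeta m ^ j‖ ^ N := by
  have hzabs : ‖zeta m‖ = 1 := Complex.norm_exp_ofReal_mul_I _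
  have hcast : (((m : ℝ) * T m k N q - 1 : ℝ) : ℂ) = (m : ℂ) * ((T m k N q : ℝ) : ℂ) - 1 := by
    push_cast; ring
  have hsplit : ∑ j ∈ Finset.range m, (zeta m ^ (j * k))⁻¹ * ((1 - q : ℂ) + q * zeta m ^ j) ^ N
      = 1 + ∑ j ∈ Finset.Ico 1 m, (zeta m ^ (j * k))⁻¹ * ((1 - q : ℂ) + q * zeta m ^ j) ^ N := by
    rw [Finset.range_eq_Ico, Finset.sum_eq_sum_Ico_succ_bot hm]
    congr 1
    rw [Nat.zero_mul, pow_zero, inv_one, one_mul,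
      show ((1:ℂ) - q + q * 1) = 1 by ring, one_pow]
  have habs : |(m : ℝ) * T m k N q - 1|
      = ‖(m : ℂ) * ((T m k N q : ℝ) : ℂ) - 1‖ := by
    rw [← hcast, Complex.norm_real, Real.norm_eq_abs]
  rw [habs, mT_eq m k hm hk N q, hsplit, add_sub_cancel_left]
  refine le_trans (norm_sum_le _ _) ?_
  refine Finset.sum_le_sum fun j _ => ?_
  rw [norm_mul, norm_inv, norm_pow, norm_pow, hzabs, one_pow, inv_one, one_mul]


lemma abs_z_sq (q θ : ℝ) :
    ‖(1 - q : ℂ) + q * Complex.exp ((θ:ℝ) * Complex.I)‖ ^ 2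
      = 1 - 2 * q * (1 - q) * (1 - Real.cos θ) := by
  rw [Complex.sq_norm, Complex.normSq_apply]
  simp only [Complex.add_re, Complex.add_im, Complex.sub_re, Complex.sub_im,
    Complex.one_re, Complex.one_im, Complex.ofReal_re, Complex.ofReal_im,
    Complex.mul_re, Complex.mul_im, Complex.exp_ofReal_mul_I_re, Complex.exp_ofReal_mul_I_im]
  linear_combination (q^2) * Real.sin_sq_add_cos_sq θ

lemma cos_lt_one' (m j : ℕ) (hj : 0 < j) (hjm : j < m) : Real.cos (2 * π * j / m) < 1 := by
  have hm : 0 < m := hj.trans hjm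
  refine lt_of_le_of_ne (Real.cos_le_one _) fun h => ?_
  rw [Real.cos_eq_one_iff] at h
  obtain ⟨t, ht⟩ := h
  have hπ : (0:ℝ) < π := Real.pi_pos
  have hm' : (0:ℝ) < m := by exact_mod_cast hm
  have hj' : (0:ℝ) < j := by exact_mod_cast hj
  have hjm' : (j:ℝ) < m := by exact_mod_cast hjm
  have htm : (t:ℝ) * m = j := by
    field_simp at ht
    nlinarith [ht]
  have ht0 : (0:ℝ) < (t:ℝ) := by nlinarith
  have ht1 : (1:ℝ) ≤ (t:ℝ) := by exact_mod_cast (by exact_mod_cast ht0 : (1:ℤ) ≤ t)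
  nlinarith

lemma tendsto_term (m j : ℕ) (hj : 0 < j) (hjm : j < m) (q : ℕ → ℝ)
    (hq0 : ∀ n, 0 ≤ q n) (hq1 : ∀ n, q n ≤ 1)
    (hq : Filter.Tendsto q Filter.atTop (nhds 0))
    (hnq : Filter.Tendsto (fun n : ℕ => (n:ℝ) * q n) Filter.atTop Filter.atTop) :
    Filter.Tendsto (fun n : ℕ => ‖(1 - q n : ℂ) + q n * zeta m ^ j‖ ^ (n - 1))
      Filter.atTop (nhds 0) := by
  have hm : 0 < m := hj.trans hjm
  set c : ℝ := 1 - Real.cos (2 * π * j / m) with hc_def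
  have hc : 0 < c := by
    have := cos_lt_one' m j hj hjm
    simp only [hc_def]
    linarith
  have hc2 : c ≤ 2 := by
    have := Real.neg_one_le_cos (2 * π * j / m)
    simp only [hc_def]; linarith
  -- the eventual bound
  have hev : ∀ᶠ n in Filter.atTop,
      ‖(1 - q n : ℂ) + q n * zeta m ^ j‖ ^ (n - 1)
        ≤ Real.exp (-(c/2) * (q n * ((n:ℝ) - 1))) := by
    filter_upwards [hq.eventually (eventually_le_nhds (by norm_num : (0:ℝ) < 1/2)),
      Filter.eventually_ge_atTop 1] with n hq2 hn1
    set qn := q n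
    have hq0' : 0 ≤ qn := hq0 n
    set A := ‖(1 - qn : ℂ) + qn * zeta m ^ j‖ with hA_def
    have hA2 : A ^ 2 = 1 - 2 * qn * (1 - qn) * c := by
      rw [hA_def, zeta_pow m j]
      exact abs_z_sq qn (2 * π * j / m)
    have hAnn : 0 ≤ A := norm_nonneg _
    have hA2le : A ^ 2 ≤ 1 - qn * c := by
      rw [hA2]
      nlinarith [mul_nonneg (mul_nonneg hq0' hc.le) (by linarith : (0:ℝ) ≤ 1 - 2*qn)]
    have hexp : 1 - qn * c ≤ Real.exp (-(qn * c)) := by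
      have := Real.add_one_le_exp (-(qn * c))
      linarith
    have hB2 : (Real.exp (-(qn * c) / 2)) ^ 2 = Real.exp (-(qn * c)) := by
      rw [sq, ← Real.exp_add]; ring_nf
    have hA : A ≤ Real.exp (-(qn * c) / 2) := by
      have h2 : A ^ 2 ≤ (Real.exp (-(qn * c) / 2)) ^ 2 := by
        rw [hB2]; exact hA2le.trans hexp
      exact (pow_le_pow_iff_left₀ hAnn (Real.exp_pos _).le two_ne_zero).1 h2
    calc A ^ (n - 1) ≤ (Real.exp (-(qn * c) / 2)) ^ (n - 1) :=
          pow_le_pow_left₀ hAnn hA (n - 1)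
      _ = Real.exp (((n - 1 : ℕ) : ℝ) * (-(qn * c) / 2)) := (Real.exp_nat_mul _ _).symm
      _ = Real.exp (-(c/2) * (qn * ((n:ℝ) - 1))) := by
          congr 1
          have : ((n - 1 : ℕ) : ℝ) = (n : ℝ) - 1 := by
            have : (1:ℕ) ≤ n := hn1
            push_cast [this]
            ring
          rw [this]; ring
  -- the bound tends to zero
  have hX : Filter.Tendsto (fun n : ℕ => q n * ((n:ℝ) - 1)) Filter.atTop Filter.atTop := by
    have h1 : Filter.Tendsto (fun n : ℕ => (n:ℝ) * q n + -(q n)) Filter.atTop Filter.atTop :=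
      Filter.tendsto_atTop_add_right_of_le _ (-1) hnq fun n => by linarith [hq1 n]
    refine h1.congr fun n => by ring
  have hBtends : Filter.Tendsto (fun n : ℕ => Real.exp (-(c/2) * (q n * ((n:ℝ) - 1))))
      Filter.atTop (nhds 0) := by
    refine Real.tendsto_exp_atBot.comp ?_
    exact (tendsto_const_mul_atBot_of_neg (neg_lt_zero.mpr (half_pos hc))).2 hX
  exact squeeze_zero' (Filter.Eventually.of_forall fun n => pow_nonneg (norm_nonneg _) _)
    hev hBtends

lemma tendsto_mT (m k : ℕ) (hm : 0 < m) (hk : k < m) (q : ℕ → ℝ)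
    (hq0 : ∀ n, 0 ≤ q n) (hq1 : ∀ n, q n ≤ 1)
    (hq : Filter.Tendsto q Filter.atTop (nhds 0))
    (hnq : Filter.Tendsto (fun n : ℕ => (n:ℝ) * q n) Filter.atTop Filter.atTop) :
    Filter.Tendsto (fun n : ℕ => (m:ℝ) * T m k (n - 1) (q n)) Filter.atTop (nhds 1) := by
  have hB : Filter.Tendsto
      (fun n : ℕ => ∑ j ∈ Finset.Ico 1 m,
        ‖(1 - q n : ℂ) + q n * zeta m ^ j‖ ^ (n - 1))
      Filter.atTop (nhds 0) := by
    have h0 : (0:ℝ) = ∑ j ∈ Finset.Ico 1 m, (0:ℝ) := by simp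
    rw [h0]
    exact tendsto_finset_sum _ fun j hj => by
      obtain ⟨hj1, hj2⟩ := Finset.mem_Ico.1 hj
      exact tendsto_term m j hj1 hj2 q hq0 hq1 hq hnq
  have key : Filter.Tendsto (fun n : ℕ => (m:ℝ) * T m k (n - 1) (q n) - 1)
      Filter.atTop (nhds 0) := by
    refine squeeze_zero_norm' ?_ hB
    filter_upwards with n
    rw [Real.norm_eq_abs]
    exact abs_mT_sub_one_le m k hm hk (n-1) (q n)
  have := key.add_const 1
  simpa using this



lemma erMeasure_singleton (n : ℕ) (p : ℝ≥0) (hp : p ≤ 1) (ω : Sym2 (Fin n) → Bool) :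
    erMeasure n p {ω} = ∏ e : Sym2 (Fin n), (if ω e then (p : ℝ≥0∞) else 1 - p) := by
  rw [erMeasure, ← Set.univ_pi_singleton ω, Measure.pi_pi]
  refine Finset.prod_congr rfl fun e _ => ?_
  rw [PMF.toMeasure_apply_singleton _ (ω e) (measurableSet_singleton _), PMF.bernoulli_apply]
  have hmin : min p 1 = p := min_eq_left hp
  rw [hmin]
  cases h : ω e <;> simp

lemma weight_toReal (p : ℝ≥0) (hp : p ≤ 1) (b : Bool) :
    (if b then (p : ℝ≥0∞) else 1 - p).toReal = W (p : ℝ) b := by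
  cases b
  · have h : (if (false = true) then (p : ℝ≥0∞) else 1 - p) = ((1 - p : ℝ≥0) : ℝ≥0∞) := by
      rw [if_neg (by simp), ← ENNReal.coe_one, ← ENNReal.coe_sub]
    rw [h, ENNReal.coe_toReal, NNReal.coe_sub hp, NNReal.coe_one]
    simp [W]
  · simp [W]

lemma ncard_colorClass (n m k : ℕ) (G : SimpleGraph (Fin n)) :
    ((colorClass G m k).ncard : ℝ) = ∑ v : Fin n, (if deg G v % m = k then (1:ℝ) else 0) := by
  classical
  have h : colorClass G m k = ↑(univ.filter fun v => deg G v % m = k) := by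
    ext v; simp [colorClass]
  rw [h, Set.ncard_coe_finset, Finset.card_filter]
  push_cast
  rfl

lemma deg_graphOfFn (n : ℕ) (ω : Sym2 (Fin n) → Bool) (v : Fin n) :
    deg (graphOfFn ω) v
      = (univ.filter fun x : {u : Fin n // u ≠ v} => ω s(v, (x : Fin n)) = true).card := by
  classical
  rw [deg]
  have h1 : (graphOfFn ω).neighborSet v
      = ↑(univ.filter fun u : Fin n => v ≠ u ∧ ω s(v, u) = true) := by
    ext u
    simp only [SimpleGraph.mem_neighborSet, Finset.coe_filter, Set.mem_setOf_eq,
      Finset.mem_univ, true_and]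
    exact Iff.rfl
  rw [h1, Set.ncard_coe_finset]
  refine (Finset.card_bij (fun (x : {u : Fin n // u ≠ v}) _ => (x : Fin n)) ?_ ?_ ?_).symm
  · intro x hx
    simp only [Finset.mem_filter, Finset.mem_univ, true_and] at hx ⊢
    exact ⟨Ne.symm x.2, hx⟩
  · intro a _ b _ hab
    exact Subtype.ext hab
  · intro u hu
    simp only [Finset.mem_filter, Finset.mem_univ, true_and] at hu
    exact ⟨⟨u, Ne.symm hu.1⟩, by simp [hu.2]⟩

lemma sum_v (n m k : ℕ) (q : ℝ) (v : Fin n) :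
    ∑ ω : Sym2 (Fin n) → Bool,
      (if deg (graphOfFn ω) v % m = k then (1:ℝ) else 0) * ∏ e, W q (ω e)
    = T m k (n - 1) q := by
  classical
  set P : Sym2 (Fin n) → Prop := fun e => v ∈ e ∧ ¬ e.IsDiag with hP
  have hmem : ∀ u : Fin n, u ≠ v → P s(v, u) := by
    intro u hu
    refine ⟨Sym2.mem_mk_left v u, ?_⟩
    rw [Sym2.mk_isDiag_iff]
    exact fun h => hu h.symm
  let f : {u : Fin n // u ≠ v} → {e : Sym2 (Fin n) // P e} := fun u => ⟨s(v, u.1), hmem u.1 u.2⟩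
  have hbij : Function.Bijective f := by
    constructor
    · rintro ⟨a, ha⟩ ⟨b, hb⟩ hab
      simp only [f, Subtype.mk_eq_mk] at hab
      rw [Sym2.eq_iff] at hab
      rcases hab with ⟨-, h⟩ | ⟨h1, h2⟩
      · exact Subtype.ext h
      · exact absurd h1.symm hb
    · rintro ⟨e, he⟩
      induction e with
      | _ a b =>
        rcases Sym2.mem_iff.1 he.1 with rfl | rfl
        · have hb : b ≠ v := fun h => he.2 (Sym2.mk_isDiag_iff.2 h.symm)
          exact ⟨⟨b, hb⟩, rfl⟩
        · have ha : a ≠ v := fun h => he.2 (Sym2.mk_isDiag_iff.2 h)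
          exact ⟨⟨a, ha⟩, Subtype.ext (Sym2.eq_swap)⟩
  let φ : {u : Fin n // u ≠ v} ≃ {e : Sym2 (Fin n) // P e} := Equiv.ofBijective f hbij
  have hcards : Fintype.card {e : Sym2 (Fin n) // P e} = n - 1 := by
    rw [← Fintype.card_congr φ]
    have : Fintype.card {u : Fin n // u ≠ v} = Fintype.card (Fin n) - 1 := by
      rw [Fintype.card_subtype_compl, Fintype.card_subtype_eq]
    rw [this, Fintype.card_fin]
  let Φ := Equiv.piEquivPiSubtypeProd P (fun _ => Bool)
  rw [← Equiv.sum_comp Φ.symm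
    (fun ω => (if deg (graphOfFn ω) v % m = k then (1:ℝ) else 0) * ∏ e, W q (ω e)),
    Fintype.sum_prod_type]
  have hωP : ∀ (σ' : {e // P e} → Bool) (τ : {e // ¬ P e} → Bool) (y : {e // P e}),
      Φ.symm (σ', τ) y.1 = σ' y := by
    intro σ' τ y
    simp [Φ, Equiv.piEquivPiSubtypeProd_symm_apply, dif_pos y.2]
  have hωN : ∀ (σ' : {e // P e} → Bool) (τ : {e // ¬ P e} → Bool) (z : {e // ¬ P e}),
      Φ.symm (σ', τ) z.1 = τ z := by
    intro σ' τ z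
    simp [Φ, Equiv.piEquivPiSubtypeProd_symm_apply, dif_neg z.2]
  have hdeg : ∀ (σ' : {e // P e} → Bool) (τ : {e // ¬ P e} → Bool),
      deg (graphOfFn (Φ.symm (σ', τ))) v
        = (univ.filter fun y : {e // P e} => σ' y = true).card := by
    intro σ' τ
    rw [deg_graphOfFn]
    refine Finset.card_bij (fun x _ => φ x) ?_ ?_ ?_
    · intro x hx
      simp only [Finset.mem_filter, Finset.mem_univ, true_and] at hx ⊢
      rw [← hωP σ' τ (φ x)]
      exact hx
    · intro a _ b _ hab
      exact φ.injective hab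
    · intro y hy
      simp only [Finset.mem_filter, Finset.mem_univ, true_and] at hy
      refine ⟨φ.symm y, ?_, by simp⟩
      simp only [Finset.mem_filter, Finset.mem_univ, true_and]
      have hval : s(v, ((φ.symm y : {u : Fin n // u ≠ v}) : Fin n)) = (y : Sym2 (Fin n)) :=
        congrArg Subtype.val (φ.apply_symm_apply y)
      rw [hval, hωP σ' τ y]
      exact hy
  have hprod : ∀ (σ' : {e // P e} → Bool) (τ : {e // ¬ P e} → Bool),
      ∏ e : Sym2 (Fin n), W q (Φ.symm (σ', τ) e)
        = (∏ y : {e // P e}, W q (σ' y)) * ∏ z : {e // ¬ P e}, W q (τ z) := by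
    intro σ' τ
    rw [← Fintype.prod_subtype_mul_prod_subtype P (fun e => W q (Φ.symm (σ', τ) e))]
    congr 1
    · exact Fintype.prod_congr _ _ fun y => by rw [hωP]
    · exact Fintype.prod_congr _ _ fun z => by rw [hωN]
  have hterm : ∀ (σ' : {e // P e} → Bool) (τ : {e // ¬ P e} → Bool),
      (if deg (graphOfFn (Φ.symm (σ', τ))) v % m = k then (1:ℝ) else 0) *
          ∏ e, W q (Φ.symm (σ', τ) e)
        = ((if (univ.filter fun y : {e // P e} => σ' y = true).card % m = k then (1:ℝ) else 0) *
            ∏ y : {e // P e}, W q (σ' y)) * ∏ z : {e // ¬ P e}, W q (τ z) := by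
    intro σ' τ
    rw [hdeg, hprod]
    ring
  simp_rw [hterm]
  have hτ : ∑ τ : {e // ¬ P e} → Bool, ∏ z : {e // ¬ P e}, W q (τ z) = 1 := by
    rw [← Fintype.piFinset_univ,
      ← Finset.prod_univ_sum (fun _ : {e // ¬ P e} => (univ : Finset Bool)) (fun _ b => W q b)]
    have : ∀ z : {e // ¬ P e}, (∑ b ∈ (univ : Finset Bool), W q b) = 1 := by
      intro z
      rw [Fintype.sum_bool]
      simp [W]
    rw [Finset.prod_congr rfl fun z _ => this z, Finset.prod_const_one]
  calc ∑ σ' : {e // P e} → Bool, ∑ τ : {e // ¬ P e} → Bool,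
        ((if (univ.filter fun y : {e // P e} => σ' y = true).card % m = k then (1:ℝ) else 0) *
          ∏ y : {e // P e}, W q (σ' y)) * ∏ z : {e // ¬ P e}, W q (τ z)
      = ∑ σ' : {e // P e} → Bool,
        ((if (univ.filter fun y : {e // P e} => σ' y = true).card % m = k then (1:ℝ) else 0) *
          ∏ y : {e // P e}, W q (σ' y)) * ∑ τ : {e // ¬ P e} → Bool,
            ∏ z : {e // ¬ P e}, W q (τ z) := by
        refine Finset.sum_congr rfl fun σ' _ => ?_
        rw [Finset.mul_sum]
    _ = ∑ σ' : {e // P e} → Bool,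
        (if (univ.filter fun y : {e // P e} => σ' y = true).card % m = k then (1:ℝ) else 0) *
          ∏ y : {e // P e}, W q (σ' y) := by
        rw [Finset.sum_congr rfl fun σ' _ => by rw [hτ, mul_one]]
    _ = T m k (Fintype.card {e // P e}) q := sum_eq_T m k _ q
    _ = T m k (n - 1) q := by rw [hcards]

lemma integral_eq (n m k : ℕ) (p : ℝ≥0) (hp : p ≤ 1) :
    ∫ ω, ((colorClass (graphOfFn ω) m k).ncard : ℝ) ∂(erMeasure n p)
      = n * T m k (n - 1) (p : ℝ) := by
  classical
  haveI : IsProbabilityMeasure (erMeasure n p) := by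
    unfold erMeasure
    infer_instance
  have hInt : Integrable
      (fun ω : Sym2 (Fin n) → Bool => ((colorClass (graphOfFn ω) m k).ncard : ℝ))
      (erMeasure n p) := .of_finite
  rw [integral_fintype hInt]
  have hμ : ∀ ω : Sym2 (Fin n) → Bool,
      ((erMeasure n p) {ω}).toReal = ∏ e, W (p:ℝ) (ω e) := by
    intro ω
    rw [erMeasure_singleton n p hp, ENNReal.toReal_prod]
    exact Finset.prod_congr rfl fun e _ => weight_toReal p hp (ω e)
  have hstep : ∀ ω : Sym2 (Fin n) → Bool,
      (erMeasure n p).real {ω} • ((colorClass (graphOfFn ω) m k).ncard : ℝ)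
        = ∑ v : Fin n,
            (if deg (graphOfFn ω) v % m = k then (1:ℝ) else 0) * ∏ e, W (p:ℝ) (ω e) := by
    intro ω
    rw [smul_eq_mul, measureReal_def, hμ, ncard_colorClass n m k, Finset.mul_sum]
    exact Finset.sum_congr rfl fun v _ => mul_comm _ _
  rw [Finset.sum_congr rfl fun ω _ => hstep ω, Finset.sum_comm,
    Finset.sum_congr rfl fun v _ => sum_v n m k (p:ℝ) v, Finset.sum_const,
    Finset.card_univ, Fintype.card_fin, nsmul_eq_mul]

end CCAux

/-- Suppose `pₙ → 0` and `n pₙ → ∞`, and let `G ~ G(n, pₙ)`. Then for any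
fixed positive integer `m` and every `k < m`, `E[|C_G(m,k)|] = (1 ± o(1)) n/m`, i.e. the
ratio of the expectation to `n/m` tends to 1. -/
theorem colorClass_expectation
    (p : ℕ → ℝ≥0) (hp1 : ∀ n, p n ≤ 1)
    (hp0 : Tendsto (fun n : ℕ => (p n : ℝ)) atTop (nhds 0))
    (hnp : Tendsto (fun n : ℕ => (n : ℝ) * (p n : ℝ)) atTop atTop)
    (m : ℕ) (hm : 0 < m) (k : ℕ) (hk : k < m) :
    Tendsto
      (fun n : ℕ =>
        (∫ ω, ((colorClass (graphOfFn ω) m k).ncard : ℝ) ∂(erMeasure n (p n))) /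
          ((n : ℝ) / m))
      atTop (nhds 1) := by
  have hq0 : ∀ n, 0 ≤ (p n : ℝ) := fun n => (p n).coe_nonneg
  have hq1' : ∀ n, (p n : ℝ) ≤ 1 := fun n => by exact_mod_cast hp1 n
  have hmain := CCAux.tendsto_mT m k hm hk (fun n => (p n : ℝ)) hq0 hq1' hp0 hnp
  refine Tendsto.congr' ?_ hmain
  filter_upwards [eventually_ge_atTop 1] with n hn
  rw [CCAux.integral_eq n m k (p n) (hp1 n)]
  have hn0 : (0:ℝ) < n := by exact_mod_cast hn
  have hm0 : (0:ℝ) < m := by exact_mod_cast hm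
  field_simp
end

section
/- Let G ~ G(n, p_n) and assume n·p_n ≤ log²(n). Then with high probability, at most log^{15}(n) vertices of G have a 2-neighborhood that is not a tree. -/
open MeasureTheory Filter Asymptotics
open scoped NNReal ENNReal

section Aux
open SimpleGraph

variable {V : Type*} {G : SimpleGraph V}

lemma support_getElem? {u w : V} (p : G.Walk u w) (i : ℕ) (hi : i ≤ p.length) :
    p.support[i]? = some (p.getVert i) := by
  induction p generalizing i with
  | nil =>
    simp only [SimpleGraph.Walk.length_nil, Nat.le_zero] at hi
    subst hi; rfl
  | cons h q ih =>
    cases i with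
    | zero => simp [SimpleGraph.Walk.support_cons]
    | succ i =>
      simp only [SimpleGraph.Walk.support_cons, List.getElem?_cons_succ,
        SimpleGraph.Walk.getVert_cons_succ]
      exact ih i (by simpa using hi)

lemma cycle_getVert_inj {u : V} {c : G.Walk u u} (hc : c.IsCycle)
    {i j : ℕ} (hi1 : 1 ≤ i) (hiL : i ≤ c.length) (hj1 : 1 ≤ j) (hjL : j ≤ c.length)
    (h : c.getVert i = c.getVert j) : i = j := by
  have hnn : c.support = u :: c.support.tail := c.support_eq_cons
  have hlen : c.support.tail.length = c.length := by
    have := c.length_support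
    have h2 : c.support.length = c.support.tail.length + 1 := by
      rw [hnn]; simp
    omega
  have key : ∀ k, 1 ≤ k → k ≤ c.length → c.support.tail[k-1]? = some (c.getVert k) := by
    intro k hk1 hkL
    have := support_getElem? c k hkL
    rw [hnn] at this
    obtain ⟨k', rfl⟩ : ∃ k', k = k' + 1 := ⟨k - 1, by omega⟩
    simpa using this
  have h1 := key i hi1 hiL
  have h2 := key j hj1 hjL
  have := (List.getElem?_inj (l := c.support.tail) (i := i-1) (j := j-1) (by omega)
    hc.support_nodup).mp (by rw [h1, h2]; exact congrArg some h)
  omega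

lemma cycle_flat_or_peak {u0 : V} {c : G.Walk u0 u0} (hc : c.IsCycle) (f : V → ℕ)
    (hstep : ∀ a b, G.Adj a b → a ∈ c.support → b ∈ c.support → f a ≤ f b + 1) :
    (∃ a b, G.Adj a b ∧ a ∈ c.support ∧ b ∈ c.support ∧ f a = f b) ∨
    (∃ x y z, x ≠ y ∧ G.Adj z x ∧ G.Adj z y ∧ z ∈ c.support ∧ x ∈ c.support ∧ y ∈ c.support ∧
      f x + 1 = f z ∧ f y + 1 = f z) := by
  classical
  set L := c.length with hLdef
  have hL : 3 ≤ L := hc.three_le_length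
  have hmem : ∀ k, k ≤ L → c.getVert k ∈ c.support := by
    intro k hk
    rw [SimpleGraph.Walk.mem_support_iff_exists_getVert]
    exact ⟨k, rfl, hk⟩
  by_cases hflat : ∃ j, j < L ∧ f (c.getVert j) = f (c.getVert (j+1))
  · obtain ⟨j, hj, hfj⟩ := hflat
    exact Or.inl ⟨c.getVert j, c.getVert (j+1), c.adj_getVert_succ hj,
      hmem j (by omega), hmem (j+1) (by omega), hfj⟩
  push_neg at hflat
  obtain ⟨i, hiIcc, hmax⟩ := Finset.exists_max_image (Finset.Icc 1 L)
    (fun k => f (c.getVert k)) ⟨1, by simp; omega⟩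
  rw [Finset.mem_Icc] at hiIcc
  have h0L : c.getVert 0 = c.getVert L := by
    rw [SimpleGraph.Walk.getVert_zero, SimpleGraph.Walk.getVert_length]
  have hM : ∀ k, k ≤ L → f (c.getVert k) ≤ f (c.getVert i) := by
    intro k hk
    rcases Nat.eq_zero_or_pos k with rfl | hk1
    · rw [h0L]; exact hmax L (by rw [Finset.mem_Icc]; omega)
    · exact hmax k (by rw [Finset.mem_Icc]; omega)
  rcases eq_or_lt_of_le hiIcc.2 with rfl | hiL
  · -- i = L
    have hadjx : G.Adj (c.getVert L) (c.getVert (L-1)) := by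
      have := c.adj_getVert_succ (i := L - 1) (by omega)
      rw [show L - 1 + 1 = L by omega] at this
      exact this.symm
    have hadjy : G.Adj (c.getVert L) (c.getVert 1) := by
      have h := c.adj_getVert_succ (i := 0) (by omega)
      rw [h0L] at h
      simpa using h
    have hxy : c.getVert (L-1) ≠ c.getVert 1 := by
      intro h
      have := cycle_getVert_inj hc (by omega : 1 ≤ L - 1) (by omega) le_rfl (by omega) h
      omega
    have hx : f (c.getVert (L-1)) + 1 = f (c.getVert L) := by
      have h1 := hflat (L-1) (by omega)
      rw [show L - 1 + 1 = L by omega] at h1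
      have h2 := hstep _ _ hadjx (hmem L le_rfl) (hmem (L-1) (by omega))
      have h3 := hM (L-1) (by omega)
      omega
    have hy : f (c.getVert 1) + 1 = f (c.getVert L) := by
      have h1 := hflat 0 (by omega)
      rw [h0L] at h1
      norm_num at h1
      have h2 := hstep _ _ hadjy (hmem L le_rfl) (hmem 1 (by omega))
      have h3 := hM 1 (by omega)
      omega
    exact Or.inr ⟨c.getVert (L-1), c.getVert 1, c.getVert L, hxy, hadjx, hadjy,
      hmem L le_rfl, hmem (L-1) (by omega), hmem 1 (by omega), hx, hy⟩
  · -- 1 ≤ i < L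
    have hi1 : 1 ≤ i := hiIcc.1
    have hadjx : G.Adj (c.getVert i) (c.getVert (i-1)) := by
      have := c.adj_getVert_succ (i := i - 1) (by omega)
      rw [show i - 1 + 1 = i by omega] at this
      exact this.symm
    have hadjy : G.Adj (c.getVert i) (c.getVert (i+1)) :=
      c.adj_getVert_succ hiL
    have hxy : c.getVert (i-1) ≠ c.getVert (i+1) := by
      intro h
      rcases eq_or_lt_of_le hi1 with h1 | h1
    
      · -- i = 1 : getVert 0 = getVert L
        rw [show i - 1 = 0 by omega, h0L] at h
        have := cycle_getVert_inj hc (by omega : 1 ≤ L) le_rfl (by omega) (by omega) h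
        omega
      · have := cycle_getVert_inj hc (by omega : 1 ≤ i - 1) (by omega) (by omega) (by omega) h
        omega
    have hx : f (c.getVert (i-1)) + 1 = f (c.getVert i) := by
      have h1 := hflat (i-1) (by omega)
      rw [show i - 1 + 1 = i by omega] at h1
      have h2 := hstep _ _ hadjx (hmem i (by omega)) (hmem (i-1) (by omega))
      have h3 := hM (i-1) (by omega)
      omega
    have hy : f (c.getVert (i+1)) + 1 = f (c.getVert i) := by
      have h1 := hflat i (by omega)
      have h2 := hstep _ _ hadjy (hmem i (by omega)) (hmem (i+1) (by omega))
      have h3 := hM (i+1) (by omega)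
      omega
    exact Or.inr ⟨c.getVert (i-1), c.getVert (i+1), c.getVert i, hxy, hadjx, hadjy,
      hmem i (by omega), hmem (i-1) (by omega), hmem (i+1) (by omega), hx, hy⟩

lemma self_mem_ball (G : SimpleGraph V) (v : V) (r : ℕ) : v ∈ _root_.ball G v r :=
  ⟨SimpleGraph.Walk.nil, Nat.zero_le r⟩

lemma reachable_induce_of_walk {s : Set V} {a b : V} (p : G.Walk a b)
    (hp : ∀ u ∈ p.support, u ∈ s) :
    (G.induce s).Reachable ⟨a, hp a p.start_mem_support⟩ ⟨b, hp b p.end_mem_support⟩ := by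
  induction p with
  | nil => rfl
  | @cons a x b h q ih =>
    have hxs : x ∈ s := hp x (by simp)
    have hadj : (G.induce s).Adj ⟨a, hp a (SimpleGraph.Walk.start_mem_support _)⟩ ⟨x, hxs⟩ := by
      simpa using h
    exact hadj.reachable.trans (ih (fun u hu => hp u (by simp [hu])))

lemma ball_connected (G : SimpleGraph V) (v : V) (r : ℕ) :
    (G.induce (_root_.ball G v r)).Connected := by
  rw [SimpleGraph.connected_iff]
  refine ⟨?_, ⟨⟨v, self_mem_ball G v r⟩⟩⟩
  intro a b
  classical
  have key : ∀ c : ↥(_root_.ball G v r), (G.induce (_root_.ball G v r)).Reachable ⟨v, self_mem_ball G v r⟩ c := by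
    rintro ⟨c, pc, hpc⟩
    have hsup : ∀ u ∈ pc.support, u ∈ _root_.ball G v r := by
      intro u hu
      exact ⟨pc.takeUntil u hu, le_trans (pc.length_takeUntil_le hu) hpc⟩
    exact reachable_induce_of_walk pc hsup
  exact (key a).symm.trans (key b)

lemma dist_le_of_mem_ball {v w : V} {r : ℕ} (h : w ∈ _root_.ball G v r) : G.dist v w ≤ r := by
  obtain ⟨p, hp⟩ := h
  exact le_trans (SimpleGraph.dist_le p) hp

lemma reachable_of_mem_ball {v w : V} {r : ℕ} (h : w ∈ _root_.ball G v r) : G.Reachable v w := by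
  obtain ⟨p, _⟩ := h
  exact ⟨p⟩

lemma adj_dist_step {v a b : V} (h : G.Adj a b) (hb : G.Reachable v b) :
    G.dist v a ≤ G.dist v b + 1 := by
  have h1 : G.edist v a ≤ G.edist v b + G.edist b a := G.edist_triangle
  rw [SimpleGraph.edist_eq_one_iff_adj.mpr h.symm] at h1
  have hfin : G.edist v b ≠ ⊤ := by
    rw [SimpleGraph.edist_ne_top_iff_reachable]
    exact hb
  have h2 : G.edist v b + 1 ≠ ⊤ := by
    intro hbad
    rcases WithTop.add_eq_top.mp hbad with h' | h'
    · exact hfin h'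
    · exact ENat.one_ne_top h'
  have := ENat.toNat_le_toNat h1 h2
  rw [ENat.toNat_add hfin (by simp : (1:ℕ∞) ≠ ⊤)] at this
  simpa [SimpleGraph.dist] using this

lemma dist_eq_zero_iff_of_reachable {v a : V} (h : G.Reachable v a) :
    G.dist v a = 0 ↔ v = a := by
  constructor
  · intro h0
    rcases SimpleGraph.dist_eq_zero_iff_eq_or_not_reachable.mp h0 with h1 | h1
    · exact h1
    · exact absurd h h1
  · rintro rfl; exact SimpleGraph.dist_self

/-- Master graph lemma: a non-tree 2-ball yields one of four small witness patterns. -/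
lemma exists_pattern (G : SimpleGraph V) (v : V)
    (h : ¬ (G.induce (_root_.ball G v 2)).IsTree) :
    (∃ a b : V, v ≠ a ∧ v ≠ b ∧ a ≠ b ∧ G.Adj v a ∧ G.Adj v b ∧ G.Adj a b) ∨
    (∃ c a b : V, v ≠ c ∧ v ≠ a ∧ v ≠ b ∧ c ≠ a ∧ c ≠ b ∧ a ≠ b ∧
      G.Adj v c ∧ G.Adj c a ∧ G.Adj c b ∧ G.Adj a b) ∨
    (∃ c d a b : V, v ≠ c ∧ v ≠ d ∧ v ≠ a ∧ v ≠ b ∧ c ≠ d ∧ c ≠ a ∧ c ≠ b ∧ d ≠ a ∧ d ≠ b ∧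
      a ≠ b ∧ G.Adj v c ∧ G.Adj v d ∧ G.Adj c a ∧ G.Adj d b ∧ G.Adj a b) ∨
    (∃ x y z : V, v ≠ x ∧ v ≠ y ∧ v ≠ z ∧ x ≠ y ∧ x ≠ z ∧ y ≠ z ∧
      G.Adj v x ∧ G.Adj v y ∧ G.Adj x z ∧ G.Adj y z) := by
  classical
  -- extract a cycle in `G` with support inside the ball
  have hconn := ball_connected G v 2
  have hnac : ¬ (G.induce (_root_.ball G v 2)).IsAcyclic := fun hac => h ⟨hconn, hac⟩
  unfold SimpleGraph.IsAcyclic at hnac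
  push_neg at hnac
  obtain ⟨w0, c0, hc0⟩ := hnac
  set emb : G.induce (_root_.ball G v 2) ↪g G := SimpleGraph.Embedding.induce (_root_.ball G v 2) with hemb
  have hinj : Function.Injective (emb.toHom : _ → V) := emb.injective
  set c : G.Walk (emb w0) (emb w0) := c0.map emb.toHom with hcdef
  have hc : c.IsCycle := (SimpleGraph.Walk.map_isCycle_iff_of_injective hinj).mpr hc0
  have hball : ∀ u ∈ c.support, u ∈ _root_.ball G v 2 := by
    intro u hu
    rw [hcdef, SimpleGraph.Walk.support_map, List.mem_map] at hu
    obtain ⟨u0, _, rfl⟩ := hu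
    exact u0.2
  have hreach : ∀ u ∈ c.support, G.Reachable v u := fun u hu => reachable_of_mem_ball (hball u hu)
  have hd2 : ∀ u ∈ c.support, G.dist v u ≤ 2 := fun u hu => dist_le_of_mem_ball (hball u hu)
  have hvne : ∀ u ∈ c.support, u ≠ v → G.dist v u ≠ 0 := by
    intro u hu hne h0
    exact hne ((dist_eq_zero_iff_of_reachable (hreach u hu)).mp h0).symm
  have hstep : ∀ a b, G.Adj a b → a ∈ c.support → b ∈ c.support →
      G.dist v a ≤ G.dist v b + 1 := by
    intro a b hab ha hb
    exact adj_dist_step hab (hreach b hb)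
  rcases cycle_flat_or_peak hc (G.dist v) hstep with
    ⟨a, b, hab, ha, hb, heq⟩ | ⟨x, y, z, hxy, hzx, hzy, hz, hx, hy, hfx, hfy⟩
  · -- flat edge case
    have hda := hd2 a ha
    have hav : a ≠ v := by
      intro hh
      rw [hh, SimpleGraph.dist_self] at heq
      exact hab.ne (hh.trans ((dist_eq_zero_iff_of_reachable (hreach b hb)).mp heq.symm))
    have hbv : b ≠ v := by
      intro hh
      rw [hh, SimpleGraph.dist_self] at heq
      exact hab.ne.symm (hh.trans ((dist_eq_zero_iff_of_reachable (hreach a ha)).mp heq))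
    have hda0 : G.dist v a ≠ 0 := hvne a ha hav
    rcases (by omega : G.dist v a = 1 ∨ G.dist v a = 2) with h1 | h2
    · -- level 1 flat edge : triangle
      have hvb : G.dist v b = 1 := by omega
      exact Or.inl ⟨a, b, (SimpleGraph.dist_eq_one_iff_adj.mp h1).ne,
        (SimpleGraph.dist_eq_one_iff_adj.mp hvb).ne, hab.ne,
        SimpleGraph.dist_eq_one_iff_adj.mp h1, SimpleGraph.dist_eq_one_iff_adj.mp hvb, hab⟩
    · -- level 2 flat edge
      have hdb : G.dist v b = 2 := by omega
      obtain ⟨pa, hpa⟩ := SimpleGraph.exists_walk_of_dist_ne_zero (by omega : G.dist v a ≠ 0)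
      obtain ⟨pb, hpb⟩ := SimpleGraph.exists_walk_of_dist_ne_zero (by omega : G.dist v b ≠ 0)
      have hpa2 : pa.length = 2 := by omega
      have hpb2 : pb.length = 2 := by omega
      set c1 := pa.getVert 1 with hc1
      set d1 := pb.getVert 1 with hd1
      have hvc1 : G.Adj v c1 := by
        have := pa.adj_getVert_succ (i := 0) (by omega)
        rwa [SimpleGraph.Walk.getVert_zero] at this
      have hvd1 : G.Adj v d1 := by
        have := pb.adj_getVert_succ (i := 0) (by omega)
        rwa [SimpleGraph.Walk.getVert_zero] at this
      have hc1a : G.Adj c1 a := by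
        have h' := pa.adj_getVert_succ (i := 1) (by omega)
        have h'' : pa.getVert 2 = a := by rw [← hpa2]; exact pa.getVert_length
        rwa [h''] at h'
      have hd1b : G.Adj d1 b := by
        have h' := pb.adj_getVert_succ (i := 1) (by omega)
        have h'' : pb.getVert 2 = b := by rw [← hpb2]; exact pb.getVert_length
        rwa [h''] at h'
      have hdc1 : G.dist v c1 = 1 := SimpleGraph.dist_eq_one_iff_adj.mpr hvc1
      have hdd1 : G.dist v d1 = 1 := SimpleGraph.dist_eq_one_iff_adj.mpr hvd1
      have hva : v ≠ a := fun hh => by rw [← hh, SimpleGraph.dist_self] at h2; omega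
      have hvb' : v ≠ b := fun hh => by rw [← hh, SimpleGraph.dist_self] at hdb; omega
      have hc1b : c1 ≠ b := fun hh => by rw [hh, hdb] at hdc1; omega
      have hd1a : d1 ≠ a := fun hh => by rw [hh, h2] at hdd1; omega
      by_cases hcd : c1 = d1
      · refine Or.inr (Or.inl ⟨c1, a, b, hvc1.ne, hva, hvb', hc1a.ne, hc1b, hab.ne,
          hvc1, hc1a, ?_, hab⟩)
        rw [hcd]; exact hd1b
      · exact Or.inr (Or.inr (Or.inl ⟨c1, d1, a, b, hvc1.ne, hvd1.ne, hva, hvb', hcd,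
          hc1a.ne, hc1b, hd1a, hd1b.ne, hab.ne, hvc1, hvd1, hc1a, hd1b, hab⟩))
  · -- peak case
    have hdz := hd2 z hz
    have hrx := hreach x hx
    have hry := hreach y hy
    have hdx1 : G.dist v x = 1 := by
      rcases Nat.eq_zero_or_pos (G.dist v x) with h0 | h1
      · exfalso
        have hxv : x = v := ((dist_eq_zero_iff_of_reachable hrx).mp h0).symm
        have hy0 : G.dist v y = 0 := by omega
        have hyv : y = v := ((dist_eq_zero_iff_of_reachable hry).mp hy0).symm
        exact hxy (hxv.trans hyv.symm)
      · omega
    have hdy1 : G.dist v y = 1 := by omega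
    have hdz2 : G.dist v z = 2 := by omega
    have hvx : G.Adj v x := SimpleGraph.dist_eq_one_iff_adj.mp hdx1
    have hvy : G.Adj v y := SimpleGraph.dist_eq_one_iff_adj.mp hdy1
    have hvz : v ≠ z := fun hh => by rw [← hh, SimpleGraph.dist_self] at hdz2; omega
    exact Or.inr (Or.inr (Or.inr ⟨x, y, z, hvx.ne, hvy.ne, hvz, hxy, hzx.ne.symm, hzy.ne.symm,
      hvx, hvy, hzx.symm, hzy.symm⟩))

end Aux

lemma erMeasure_cylinder (n : ℕ) (p : ℝ≥0) (E : Finset (Sym2 (Fin n))) :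
    erMeasure n p {ω | ∀ e ∈ E, ω e = true} = (min (p : ℝ≥0∞) 1) ^ E.card := by
  classical
  have hset : {ω : Sym2 (Fin n) → Bool | ∀ e ∈ E, ω e = true}
      = Set.pi Set.univ (fun e => if e ∈ E then {true} else Set.univ) := by
    ext ω
    simp only [Set.mem_setOf_eq, Set.mem_pi, Set.mem_univ, forall_true_left]
    constructor
    · intro h e
      by_cases he : e ∈ E <;> simp [he, h e]
    · intro h e he
      have := h e
      simp [he] at this
      exact this
  rw [erMeasure, hset, MeasureTheory.Measure.pi_pi]
  have hb : ∀ e : Sym2 (Fin n),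
      (PMF.bernoulli (min p 1) (min_le_right _ _)).toMeasure
        (if e ∈ E then ({true} : Set Bool) else Set.univ)
      = if e ∈ E then (min (p : ℝ≥0∞) 1) else 1 := by
    intro e
    by_cases he : e ∈ E <;>
      simp [he, PMF.toMeasure_apply_singleton _ _ (measurableSet_singleton _), PMF.bernoulli_apply]
  simp only [hb]
  rw [Finset.prod_ite_mem]
  simp [Finset.univ_inter]

lemma erMeasure_cylinder_le (n : ℕ) (p : ℝ≥0) (E : Finset (Sym2 (Fin n))) (k : ℕ)
    (hk : E.card = k) :
    erMeasure n p {ω | ∀ e ∈ E, ω e = true} ≤ (p : ℝ≥0∞) ^ k := by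
  rw [erMeasure_cylinder, hk]
  exact pow_le_pow_left' (min_le_left _ _) k

instance erMeasure_isProbabilityMeasure (n : ℕ) (p : ℝ≥0) :
    IsProbabilityMeasure (erMeasure n p) := by
  unfold erMeasure; infer_instance

lemma erMeasure_measurableSet {n : ℕ} (s : Set (Sym2 (Fin n) → Bool)) : MeasurableSet s :=
  s.to_countable.measurableSet

lemma union_bound_le {n : ℕ} (p : ℝ≥0) {ι : Type*} [Fintype ι] (D : ι → Prop)
    (E : ι → Finset (Sym2 (Fin n))) (k : ℕ) (hcard : ∀ t, D t → (E t).card = k) :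
    erMeasure n p (⋃ t, ⋃ (_ : D t), {ω | ∀ e ∈ E t, ω e = true})
      ≤ (Fintype.card ι : ℝ≥0∞) * (p : ℝ≥0∞) ^ k := by
  classical
  refine le_trans (measure_iUnion_fintype_le _ _) ?_
  have hone : ∀ t, erMeasure n p (⋃ (_ : D t), {ω | ∀ e ∈ E t, ω e = true})
      ≤ (p : ℝ≥0∞) ^ k := by
    intro t
    by_cases hD : D t
    · rw [Set.iUnion_eq_if, if_pos hD]; exact erMeasure_cylinder_le n p (E t) k (hcard t hD)
    · rw [Set.iUnion_eq_if, if_neg hD]; simp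
  refine le_trans (Finset.sum_le_sum (fun t _ => hone t)) ?_
  rw [Finset.sum_const, Finset.card_univ, nsmul_eq_mul]

lemma bad_measure (n : ℕ) (p : ℝ≥0) (v : Fin n) :
    erMeasure n p {ω | ¬ ((graphOfFn ω).induce (ball (graphOfFn ω) v 2)).IsTree}
      ≤ ((n:ℝ≥0∞)^2 * (p:ℝ≥0∞)^3 + (n:ℝ≥0∞)^3 * (p:ℝ≥0∞)^4)
        + ((n:ℝ≥0∞)^4 * (p:ℝ≥0∞)^5 + (n:ℝ≥0∞)^3 * (p:ℝ≥0∞)^4) := by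
  set μ := erMeasure n p with hμ
  set D1 : Fin n × Fin n → Prop := fun t => v ≠ t.1 ∧ v ≠ t.2 ∧ t.1 ≠ t.2 with hD1
  set E1 : Fin n × Fin n → Finset (Sym2 (Fin n)) :=
    fun t => {s(v, t.1), s(v, t.2), s(t.1, t.2)} with hE1
  set D2 : Fin n × Fin n × Fin n → Prop := fun t =>
    v ≠ t.1 ∧ v ≠ t.2.1 ∧ v ≠ t.2.2 ∧ t.1 ≠ t.2.1 ∧ t.1 ≠ t.2.2 ∧ t.2.1 ≠ t.2.2 with hD2
  set E2 : Fin n × Fin n × Fin n → Finset (Sym2 (Fin n)) :=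
    fun t => {s(v, t.1), s(t.1, t.2.1), s(t.1, t.2.2), s(t.2.1, t.2.2)} with hE2
  set D3 : Fin n × Fin n × Fin n × Fin n → Prop := fun t =>
    v ≠ t.1 ∧ v ≠ t.2.1 ∧ v ≠ t.2.2.1 ∧ v ≠ t.2.2.2 ∧ t.1 ≠ t.2.1 ∧ t.1 ≠ t.2.2.1 ∧
      t.1 ≠ t.2.2.2 ∧ t.2.1 ≠ t.2.2.1 ∧ t.2.1 ≠ t.2.2.2 ∧ t.2.2.1 ≠ t.2.2.2 with hD3
  set E3 : Fin n × Fin n × Fin n × Fin n → Finset (Sym2 (Fin n)) :=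
    fun t => {s(v, t.1), s(v, t.2.1), s(t.1, t.2.2.1), s(t.2.1, t.2.2.2),
      s(t.2.2.1, t.2.2.2)} with hE3
  set D4 : Fin n × Fin n × Fin n → Prop := fun t =>
    v ≠ t.1 ∧ v ≠ t.2.1 ∧ v ≠ t.2.2 ∧ t.1 ≠ t.2.1 ∧ t.1 ≠ t.2.2 ∧ t.2.1 ≠ t.2.2 with hD4
  set E4 : Fin n × Fin n × Fin n → Finset (Sym2 (Fin n)) :=
    fun t => {s(v, t.1), s(v, t.2.1), s(t.1, t.2.2), s(t.2.1, t.2.2)} with hE4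
  have hsub : {ω : Sym2 (Fin n) → Bool |
      ¬ ((graphOfFn ω).induce (ball (graphOfFn ω) v 2)).IsTree}
      ⊆ ((⋃ t, ⋃ (_ : D1 t), {ω | ∀ e ∈ E1 t, ω e = true})
        ∪ (⋃ t, ⋃ (_ : D2 t), {ω | ∀ e ∈ E2 t, ω e = true}))
        ∪ ((⋃ t, ⋃ (_ : D3 t), {ω | ∀ e ∈ E3 t, ω e = true})
        ∪ (⋃ t, ⋃ (_ : D4 t), {ω | ∀ e ∈ E4 t, ω e = true})) := by
    intro ω hω
    rcases exists_pattern (graphOfFn ω) v hω with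
      ⟨a, b, h1, h2, h3, h4, h5, h6⟩ |
      ⟨c, a, b, h1, h2, h3, h4, h5, h6, h7, h8, h9, h10⟩ |
      ⟨c, d, a, b, h1, h2, h3, h4, h5, h6, h7, h8, h9, h10, h11, h12, h13, h14, h15⟩ |
      ⟨x, y, z, h1, h2, h3, h4, h5, h6, h7, h8, h9, h10⟩
    · refine Or.inl (Or.inl (Set.mem_iUnion.mpr ⟨(a, b), ?_⟩))
      refine Set.mem_iUnion.mpr ⟨⟨h1, h2, h3⟩, ?_⟩
      intro e he
      simp only [hE1, Finset.mem_insert, Finset.mem_singleton] at he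
      rcases he with rfl | rfl | rfl
      exacts [(h4 : _ ∧ _).2, (h5 : _ ∧ _).2, (h6 : _ ∧ _).2]
    · refine Or.inl (Or.inr (Set.mem_iUnion.mpr ⟨(c, a, b), ?_⟩))
      refine Set.mem_iUnion.mpr ⟨⟨h1, h2, h3, h4, h5, h6⟩, ?_⟩
      intro e he
      simp only [hE2, Finset.mem_insert, Finset.mem_singleton] at he
      rcases he with rfl | rfl | rfl | rfl
      exacts [(h7 : _ ∧ _).2, (h8 : _ ∧ _).2, (h9 : _ ∧ _).2, (h10 : _ ∧ _).2]
    · refine Or.inr (Or.inl (Set.mem_iUnion.mpr ⟨(c, d, a, b), ?_⟩))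
      refine Set.mem_iUnion.mpr ⟨⟨h1, h2, h3, h4, h5, h6, h7, h8, h9, h10⟩, ?_⟩
      intro e he
      simp only [hE3, Finset.mem_insert, Finset.mem_singleton] at he
      rcases he with rfl | rfl | rfl | rfl | rfl
      exacts [(h11 : _ ∧ _).2, (h12 : _ ∧ _).2, (h13 : _ ∧ _).2, (h14 : _ ∧ _).2, (h15 : _ ∧ _).2]
    · refine Or.inr (Or.inr (Set.mem_iUnion.mpr ⟨(x, y, z), ?_⟩))
      refine Set.mem_iUnion.mpr ⟨⟨h1, h2, h3, h4, h5, h6⟩, ?_⟩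
      intro e he
      simp only [hE4, Finset.mem_insert, Finset.mem_singleton] at he
      rcases he with rfl | rfl | rfl | rfl
      exacts [(h7 : _ ∧ _).2, (h8 : _ ∧ _).2, (h9 : _ ∧ _).2, (h10 : _ ∧ _).2]
  refine le_trans (measure_mono hsub) ?_
  refine le_trans (measure_union_le _ _) ?_
  refine le_trans (add_le_add (measure_union_le _ _) (measure_union_le _ _)) ?_
  have hb1 := union_bound_le (n := n) p D1 E1 3 ?c1
  have hb2 := union_bound_le (n := n) p D2 E2 4 ?c2
  have hb3 := union_bound_le (n := n) p D3 E3 5 ?c3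
  have hb4 := union_bound_le (n := n) p D4 E4 4 ?c4
  case c1 =>
    rintro ⟨a, b⟩ ⟨h1, h2, h3⟩
    simp only [hE1]
    rw [Finset.card_insert_of_notMem (by simp [Sym2.eq_iff]; tauto),
      Finset.card_insert_of_notMem (by simp [Sym2.eq_iff]; tauto), Finset.card_singleton]
  case c2 =>
    rintro ⟨c, a, b⟩ ⟨h1, h2, h3, h4, h5, h6⟩
    simp only [hE2]
    rw [Finset.card_insert_of_notMem (by simp [Sym2.eq_iff]; tauto),
      Finset.card_insert_of_notMem (by simp [Sym2.eq_iff]; tauto),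
      Finset.card_insert_of_notMem (by simp [Sym2.eq_iff]; tauto), Finset.card_singleton]
  case c3 =>
    rintro ⟨c, d, a, b⟩ ⟨h1, h2, h3, h4, h5, h6, h7, h8, h9, h10⟩
    simp only [hE3]
    rw [Finset.card_insert_of_notMem (by simp [Sym2.eq_iff]; tauto),
      Finset.card_insert_of_notMem (by simp [Sym2.eq_iff]; tauto),
      Finset.card_insert_of_notMem (by simp [Sym2.eq_iff]; tauto),
      Finset.card_insert_of_notMem (by simp [Sym2.eq_iff]; tauto), Finset.card_singleton]
  case c4 =>
    rintro ⟨x, y, z⟩ ⟨h1, h2, h3, h4, h5, h6⟩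
    simp only [hE4]
    rw [Finset.card_insert_of_notMem (by simp [Sym2.eq_iff]; tauto),
      Finset.card_insert_of_notMem (by simp [Sym2.eq_iff]; tauto),
      Finset.card_insert_of_notMem (by simp [Sym2.eq_iff]; tauto), Finset.card_singleton]
  have hcards2 : (Fintype.card (Fin n × Fin n) : ℝ≥0∞) = (n:ℝ≥0∞)^2 := by
    simp [Fintype.card_prod]; push_cast; ring
  have hcards3 : (Fintype.card (Fin n × Fin n × Fin n) : ℝ≥0∞) = (n:ℝ≥0∞)^3 := by
    simp [Fintype.card_prod]; push_cast; ring
  have hcards4 : (Fintype.card (Fin n × Fin n × Fin n × Fin n) : ℝ≥0∞) = (n:ℝ≥0∞)^4 := by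
    simp [Fintype.card_prod]; push_cast; ring
  rw [hcards2] at hb1
  rw [hcards3] at hb2
  rw [hcards4] at hb3
  rw [hcards3] at hb4
  exact add_le_add (add_le_add hb1 hb2) (add_le_add hb3 hb4)

/-- Let `G ~ G(n, pₙ)` with `n pₙ ≤ log²(n)`. Then with high probability
at most `log^{15}(n)` vertices of `G` have a 2-neighborhood that is not a tree. -/
theorem few_non_tree_two_neighborhoods
    (p : ℕ → ℝ≥0) (hp1 : ∀ n, p n ≤ 1)
    (hub : ∀ n : ℕ, (n : ℝ) * (p n : ℝ) ≤ (Real.log n) ^ 2) :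
    Tendsto
      (fun n => erMeasure n (p n)
        {ω | ({v : Fin n |
            ¬ ((graphOfFn ω).induce (ball (graphOfFn ω) v 2)).IsTree}.ncard : ℝ)
          ≤ (Real.log n) ^ 15})
      atTop (nhds 1) := by
  classical
  set bad : (n : ℕ) → (Sym2 (Fin n) → Bool) → Set (Fin n) := fun n ω =>
    {v : Fin n | ¬ ((graphOfFn ω).induce (ball (graphOfFn ω) v 2)).IsTree} with hbad
  set B : (n : ℕ) → Set (Sym2 (Fin n) → Bool) := fun n =>
    {ω | ¬ (((bad n ω).ncard : ℝ) ≤ (Real.log n) ^ 15)} with hB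
  -- Step A : expectation bound
  have hexp : ∀ n : ℕ, ∫⁻ ω, ((bad n ω).ncard : ℝ≥0∞) ∂ (erMeasure n (p n))
      ≤ (n : ℝ≥0∞) * (((n:ℝ≥0∞)^2 * (p n : ℝ≥0∞)^3 + (n:ℝ≥0∞)^3 * (p n : ℝ≥0∞)^4)
        + ((n:ℝ≥0∞)^4 * (p n : ℝ≥0∞)^5 + (n:ℝ≥0∞)^3 * (p n : ℝ≥0∞)^4)) := by
    intro n
    have hXeq : ∀ ω : Sym2 (Fin n) → Bool, ((bad n ω).ncard : ℝ≥0∞)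
        = ∑ v : Fin n, (if ¬ ((graphOfFn ω).induce (ball (graphOfFn ω) v 2)).IsTree
            then (1:ℝ≥0∞) else 0) := by
      intro ω
      rw [hbad]
      rw [Set.ncard_eq_toFinset_card', Set.toFinset_setOf, Finset.card_filter]
      push_cast
      rfl
    simp only [hXeq]
    rw [MeasureTheory.lintegral_finset_sum _ (fun v _ => measurable_of_countable _)]
    refine le_trans (Finset.sum_le_sum (g := fun _ : Fin n =>
      ((n:ℝ≥0∞)^2 * (p n : ℝ≥0∞)^3 + (n:ℝ≥0∞)^3 * (p n : ℝ≥0∞)^4)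
        + ((n:ℝ≥0∞)^4 * (p n : ℝ≥0∞)^5 + (n:ℝ≥0∞)^3 * (p n : ℝ≥0∞)^4))
      (fun v _ => ?_)) ?_
    · have heq : ∫⁻ ω, (if ¬ ((graphOfFn ω).induce (ball (graphOfFn ω) v 2)).IsTree
            then (1:ℝ≥0∞) else 0) ∂ (erMeasure n (p n))
          = erMeasure n (p n)
            {ω | ¬ ((graphOfFn ω).induce (ball (graphOfFn ω) v 2)).IsTree} := by
        rw [← MeasureTheory.lintegral_indicator_one (erMeasure_measurableSet _)]
        congr 1
        ext ω
        simp [Set.indicator_apply]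
      rw [heq]
      exact bad_measure n (p n) v
    · rw [Finset.sum_const, Finset.card_univ, Fintype.card_fin, nsmul_eq_mul]
  -- Step B : Markov + numeric bound, for large n
  have key : ∀ n : ℕ, 1 ≤ Real.log n →
      erMeasure n (p n) (B n) ≤ ENNReal.ofReal (4 / (Real.log n) ^ 5) := by
    intro n hL
    set L := Real.log n with hLdef
    have hL0 : 0 < L := lt_of_lt_of_le one_pos hL
    have hε0 : (0:ℝ) < L ^ 15 := by positivity
    have hBsub : B n ⊆ {ω | ENNReal.ofReal (L ^ 15) ≤ ((bad n ω).ncard : ℝ≥0∞)} := by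
      intro ω hω
      simp only [hB, Set.mem_setOf_eq, not_le] at hω
      refine le_trans (ENNReal.ofReal_le_ofReal hω.le) ?_
      rw [ENNReal.ofReal_natCast]
    have hmar := MeasureTheory.mul_meas_ge_le_lintegral₀
      (μ := erMeasure n (p n)) (f := fun ω => ((bad n ω).ncard : ℝ≥0∞))
      ((measurable_of_countable _).aemeasurable) (ENNReal.ofReal (L ^ 15))
    have hmB : erMeasure n (p n) (B n)
        ≤ (∫⁻ ω, ((bad n ω).ncard : ℝ≥0∞) ∂ (erMeasure n (p n))) / ENNReal.ofReal (L ^ 15) := by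
      refine le_trans (measure_mono hBsub) ?_
      rw [ENNReal.le_div_iff_mul_le (Or.inl ?_) (Or.inl ENNReal.ofReal_ne_top)]
      · rw [mul_comm]; exact hmar
      · exact (ENNReal.ofReal_pos.mpr hε0).ne'
    -- numeric bound on the expectation
    have hnp : (n : ℝ≥0∞) * (p n : ℝ≥0∞) ≤ ENNReal.ofReal (L ^ 2) := by
      have h1 : (n:ℝ≥0∞) * (p n : ℝ≥0∞) = ENNReal.ofReal ((n:ℝ) * (p n : ℝ)) := by
        rw [ENNReal.ofReal_mul (by positivity), ENNReal.ofReal_natCast,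
          ENNReal.ofReal_coe_nnreal]
      rw [h1]
      exact ENNReal.ofReal_le_ofReal (hub n)
    have hpow : ∀ k : ℕ, ((n : ℝ≥0∞) * (p n : ℝ≥0∞)) ^ k ≤ ENNReal.ofReal (L ^ (2 * k)) := by
      intro k
      calc ((n : ℝ≥0∞) * (p n : ℝ≥0∞)) ^ k ≤ (ENNReal.ofReal (L ^ 2)) ^ k :=
            pow_le_pow_left' hnp k
        _ = ENNReal.ofReal ((L ^ 2) ^ k) := (ENNReal.ofReal_pow (by positivity) k).symm
        _ = ENNReal.ofReal (L ^ (2 * k)) := by rw [← pow_mul]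
    have hupper : (n : ℝ≥0∞) * (((n:ℝ≥0∞)^2 * (p n : ℝ≥0∞)^3 + (n:ℝ≥0∞)^3 * (p n : ℝ≥0∞)^4)
        + ((n:ℝ≥0∞)^4 * (p n : ℝ≥0∞)^5 + (n:ℝ≥0∞)^3 * (p n : ℝ≥0∞)^4))
        ≤ ENNReal.ofReal (4 * L ^ 10) := by
      have hre : (n : ℝ≥0∞) * (((n:ℝ≥0∞)^2 * (p n : ℝ≥0∞)^3 + (n:ℝ≥0∞)^3 * (p n : ℝ≥0∞)^4)
          + ((n:ℝ≥0∞)^4 * (p n : ℝ≥0∞)^5 + (n:ℝ≥0∞)^3 * (p n : ℝ≥0∞)^4))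
          = ((n:ℝ≥0∞) * (p n : ℝ≥0∞))^3 + ((n:ℝ≥0∞) * (p n : ℝ≥0∞))^4
            + (((n:ℝ≥0∞) * (p n : ℝ≥0∞))^5 + ((n:ℝ≥0∞) * (p n : ℝ≥0∞))^4) := by
        ring
      rw [hre]
      have hLk : ∀ k : ℕ, k ≤ 10 → ENNReal.ofReal (L ^ k) ≤ ENNReal.ofReal (L ^ 10) :=
        fun k hk => ENNReal.ofReal_le_ofReal (pow_le_pow_right₀ hL hk)
      have h3 := le_trans (hpow 3) (hLk 6 (by norm_num))
      have h4 := le_trans (hpow 4) (hLk 8 (by norm_num))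
      have h5 := le_trans (hpow 5) (hLk 10 (by norm_num))
      refine le_trans (add_le_add (add_le_add h3 h4) (add_le_add h5 h4)) (le_of_eq ?_)
      rw [← ENNReal.ofReal_add (by positivity) (by positivity),
        ← ENNReal.ofReal_add (by positivity) (by positivity)]
      congr 1
      ring
    have hfinal : erMeasure n (p n) (B n)
        ≤ ENNReal.ofReal (4 * L ^ 10) / ENNReal.ofReal (L ^ 15) :=
      le_trans hmB (ENNReal.div_le_div_right (le_trans (hexp n) hupper) _)
    refine le_trans hfinal ?_
    rw [← ENNReal.ofReal_div_of_pos hε0]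
    refine ENNReal.ofReal_le_ofReal (le_of_eq ?_)
    have hLne : L ≠ 0 := hL0.ne'
    field_simp
  -- Step C : limits
  have hlog : Filter.Tendsto (fun n : ℕ => Real.log n) atTop atTop :=
    Real.tendsto_log_atTop.comp tendsto_natCast_atTop_atTop
  have hL5 : Filter.Tendsto (fun n : ℕ => (Real.log n) ^ 5) atTop atTop :=
    (tendsto_pow_atTop (by norm_num : (5:ℕ) ≠ 0)).comp hlog
  have hdiv : Filter.Tendsto (fun n : ℕ => 4 / (Real.log n) ^ 5) atTop (nhds 0) :=
    Filter.Tendsto.div_atTop tendsto_const_nhds hL5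
  have hofReal : Filter.Tendsto (fun n : ℕ => ENNReal.ofReal (4 / (Real.log n) ^ 5))
      atTop (nhds 0) := by
    have := ENNReal.tendsto_ofReal hdiv
    simpa using this
  have hev : ∀ᶠ n : ℕ in atTop, erMeasure n (p n) (B n)
      ≤ ENNReal.ofReal (4 / (Real.log n) ^ 5) := by
    rw [Filter.eventually_atTop]
    refine ⟨3, fun n hn => key n ?_⟩
    rw [Real.le_log_iff_exp_le (by exact_mod_cast Nat.lt_of_lt_of_le (by norm_num) hn)]
    refine le_trans (le_of_lt Real.exp_one_lt_d9) ?_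
    calc (2.7182818286 : ℝ) ≤ 3 := by norm_num
      _ ≤ n := by exact_mod_cast hn
  have hμB : Filter.Tendsto (fun n : ℕ => erMeasure n (p n) (B n)) atTop (nhds 0) :=
    tendsto_of_tendsto_of_tendsto_of_le_of_le' tendsto_const_nhds hofReal
      (Filter.Eventually.of_forall (fun n => bot_le)) hev
  -- Step D : conclusion
  have hcompl : ∀ n : ℕ, erMeasure n (p n)
      {ω | (((bad n ω).ncard : ℝ)) ≤ (Real.log n) ^ 15} = 1 - erMeasure n (p n) (B n) := by
    intro n
    have hTB : {ω : Sym2 (Fin n) → Bool | ((bad n ω).ncard : ℝ) ≤ (Real.log n) ^ 15}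
        = (B n)ᶜ := by
      ext ω
      simp [hB]
    rw [hTB, MeasureTheory.prob_compl_eq_one_sub (erMeasure_measurableSet _)]
  have hgoal : Filter.Tendsto (fun n : ℕ => 1 - erMeasure n (p n) (B n)) atTop (nhds 1) := by
    have hc : Filter.Tendsto (fun x : ℝ≥0∞ => 1 - x) (nhds 0) (nhds (1 - 0)) :=
      (ENNReal.continuous_sub_left ENNReal.one_ne_top).tendsto 0
    have := hc.comp hμB
    simpa [Function.comp_def] using this
  refine hgoal.congr (fun n => ?_)
  rw [← hcompl n]
end

section
/- Let λ ∈ (0,1). For each n let G1 = G1(n) ∈ 𝒢_n(λ) be an arbitrary graph and let G2 ~ G(n, p_n), where p_n → 0 and p_n = ω(log(n)/n). Let G be the union of G1 and G2. Then, uniformly over all pairs of vertices u, v ∈ [n], the probability that N(u) \ (N(v) ∪ {v}) is empty (where N denotes neighborhoods in G) is o(n^{−2}). The same conclusion holds if G is instead the XOR of G1 and G2. -/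
open MeasureTheory Filter Asymptotics
open scoped NNReal ENNReal

/-- The XOR of two graphs: `(u,v)` is an edge iff it is an edge of exactly one of the two. -/
def sgXor {V : Type*} (A B : SimpleGraph V) : SimpleGraph V := (A \ B) ⊔ (B \ A)

/- ### Auxiliary lemmas -/

lemma aux_meas_all {α : Type*} [MeasurableSpace α] [Countable α] [MeasurableSingletonClass α]
    (s : Set α) : MeasurableSet s :=
  s.to_countable.measurableSet

lemma aux_block {ι : Type*} [Fintype ι] (ν : Measure Bool) [IsProbabilityMeasure ν]
    (p : ι → Prop) [DecidablePred p] (A B : Set (ι → Bool))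
    (hA : ∀ ω ω' : ι → Bool, (∀ i, p i → ω i = ω' i) → ω ∈ A → ω' ∈ A)
    (hB : ∀ ω ω' : ι → Bool, (∀ i, ¬ p i → ω i = ω' i) → ω ∈ B → ω' ∈ B) :
    Measure.pi (fun _ : ι => ν) (A ∩ B)
      = Measure.pi (fun _ : ι => ν) A * Measure.pi (fun _ : ι => ν) B := by
  classical
  set μ := Measure.pi (fun _ : ι => ν)
  set Φ := MeasurableEquiv.piEquivPiSubtypeProd (fun _ : ι => Bool) p with hΦdef
  have hΦ : MeasurePreserving Φ μ
      ((Measure.pi fun _ : {i // p i} => ν).prod (Measure.pi fun _ : {i // ¬ p i} => ν)) :=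
    measurePreserving_piEquivPiSubtypeProd (fun _ : ι => ν) p
  set A₁ : Set ({i // p i} → Bool) := (fun (ω : ι → Bool) (i : {i // p i}) => ω i) '' A with hA₁
  set B₂ : Set ({i // ¬ p i} → Bool) := (fun (ω : ι → Bool) (i : {i // ¬ p i}) => ω i) '' B with hB₂
  have hAeq : A = Φ ⁻¹' (A₁ ×ˢ (Set.univ : Set ({i // ¬ p i} → Bool))) := by
    ext ω
    constructor
    · intro h
      exact ⟨⟨ω, h, rfl⟩, trivial⟩
    · rintro ⟨⟨ω', hω', h⟩, -⟩
      refine hA ω' ω (fun i hi => ?_) hω'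
      exact congrFun h ⟨i, hi⟩
  have hBeq : B = Φ ⁻¹' ((Set.univ : Set ({i // p i} → Bool)) ×ˢ B₂) := by
    ext ω
    constructor
    · intro h
      exact ⟨trivial, ⟨ω, h, rfl⟩⟩
    · rintro ⟨-, ⟨ω', hω', h⟩⟩
      refine hB ω' ω (fun i hi => ?_) hω'
      exact congrFun h ⟨i, hi⟩
  have hABeq : A ∩ B = Φ ⁻¹' (A₁ ×ˢ B₂) := by
    rw [hAeq, hBeq, ← Set.preimage_inter, Set.prod_inter_prod, Set.univ_inter, Set.inter_univ]
  rw [hABeq, hAeq, hBeq, hΦ.measure_preimage (aux_meas_all _).nullMeasurableSet,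
    hΦ.measure_preimage (aux_meas_all _).nullMeasurableSet,
    hΦ.measure_preimage (aux_meas_all _).nullMeasurableSet,
    Measure.prod_prod, Measure.prod_prod, Measure.prod_prod]
  simp [measure_univ]

lemma aux_meas_eval {ι : Type*} [Fintype ι] (ν : Measure Bool) [IsProbabilityMeasure ν]
    (i : ι) (s : Set Bool) :
    Measure.pi (fun _ : ι => ν) (Function.eval i ⁻¹' s) = ν s := by
  classical
  rw [Set.eval_preimage, Measure.pi_pi]
  rw [Finset.prod_eq_single i
    (fun j _ hj => by rw [Function.update_of_ne hj]; exact measure_univ)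
    (by simp)]
  simp

lemma aux_meas_pair {ι : Type*} [Fintype ι] (ν : Measure Bool) [IsProbabilityMeasure ν]
    (i1 i2 : ι) (h : i1 ≠ i2) :
    Measure.pi (fun _ : ι => ν) {ω | ω i1 = true ∧ ω i2 = false}
      = ν {true} * ν {false} := by
  classical
  have hset : {ω : ι → Bool | ω i1 = true ∧ ω i2 = false}
      = {ω : ι → Bool | ω i1 = true} ∩ {ω : ι → Bool | ω i2 = false} := rfl
  rw [hset, aux_block ν (fun i => i = i1) _ _
    (fun ω ω' hag hω => by simpa [← hag i1 rfl] using hω)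
    (fun ω ω' hag hω => by simpa [← hag i2 h.symm] using hω)]
  have h1 : {ω : ι → Bool | ω i1 = true} = Function.eval i1 ⁻¹' ({true} : Set Bool) := rfl
  have h2 : {ω : ι → Bool | ω i2 = false} = Function.eval i2 ⁻¹' ({false} : Set Bool) := rfl
  rw [h1, h2, aux_meas_eval, aux_meas_eval]

lemma aux_meas_imp {ι : Type*} [Fintype ι] (ν : Measure Bool) [IsProbabilityMeasure ν]
    (i1 i2 : ι) (h : i1 ≠ i2) :
    Measure.pi (fun _ : ι => ν) {ω | ω i1 = true → ω i2 = true}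
      = 1 - ν {true} * ν {false} := by
  have hc : {ω : ι → Bool | ω i1 = true → ω i2 = true}ᶜ
      = {ω : ι → Bool | ω i1 = true ∧ ω i2 = false} := by
    ext ω
    simp [Set.mem_compl_iff, Set.mem_setOf_eq, Classical.not_imp, Bool.not_eq_true]
  have hco := measure_compl (μ := Measure.pi (fun _ : ι => ν))
    (aux_meas_all {ω : ι → Bool | ω i1 = true → ω i2 = true}) (measure_ne_top _ _)
  rw [hc, aux_meas_pair ν i1 i2 h, measure_univ] at hco
  rw [hco, ENNReal.sub_sub_cancel ENNReal.one_ne_top prob_le_one]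

lemma aux_iter {ι : Type*} [Fintype ι] (ν : Measure Bool) [IsProbabilityMeasure ν]
    {κ : Type*} [DecidableEq κ] (e1 e2 : κ → ι) (S : Finset κ)
    (hd : ∀ w ∈ S, ∀ w' ∈ S, w ≠ w' →
      e1 w ≠ e1 w' ∧ e1 w ≠ e2 w' ∧ e2 w ≠ e1 w' ∧ e2 w ≠ e2 w')
    (hne : ∀ w ∈ S, e1 w ≠ e2 w) :
    Measure.pi (fun _ : ι => ν) {ω | ∀ w ∈ S, ω (e1 w) = true → ω (e2 w) = true}
      = (1 - ν {true} * ν {false}) ^ S.card := by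
  classical
  induction S using Finset.induction_on with
  | empty => simp
  | @insert a S' ha IH =>
    have hset : {ω : ι → Bool | ∀ w ∈ insert a S', ω (e1 w) = true → ω (e2 w) = true}
        = {ω : ι → Bool | ω (e1 a) = true → ω (e2 a) = true}
          ∩ {ω : ι → Bool | ∀ w ∈ S', ω (e1 w) = true → ω (e2 w) = true} := by
      ext ω
      simp [Finset.forall_mem_insert, Set.mem_setOf_eq]
    have hblock := aux_block ν (fun i => i = e1 a ∨ i = e2 a)
      {ω : ι → Bool | ω (e1 a) = true → ω (e2 a) = true}
      {ω : ι → Bool | ∀ w ∈ S', ω (e1 w) = true → ω (e2 w) = true}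
      (fun ω ω' hag hω => by
        have h1 := hag (e1 a) (Or.inl rfl)
        have h2 := hag (e2 a) (Or.inr rfl)
        simpa [← h1, ← h2] using hω)
      (fun ω ω' hag hω w hw => by
        have hwa : w ≠ a := fun h => ha (h ▸ hw)
        obtain ⟨u1, u2, u3, u4⟩ := hd w (Finset.mem_insert_of_mem hw) a
          (Finset.mem_insert_self a S') hwa
        have h1 := hag (e1 w) (by tauto)
        have h2 := hag (e2 w) (by tauto)
        rw [← h1, ← h2]
        exact hω w hw)
    rw [hset, hblock, aux_meas_imp ν _ _ (hne a (Finset.mem_insert_self a S')),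
      IH (fun w hw w' hw' hww' => hd w (Finset.mem_insert_of_mem hw) w'
        (Finset.mem_insert_of_mem hw') hww')
        (fun w hw => hne w (Finset.mem_insert_of_mem hw)),
      Finset.card_insert_of_notMem ha, pow_succ, mul_comm]

lemma aux_mainBound (n : ℕ) (p : ℝ≥0) (hp : p ≤ 1) {u v : Fin n} (huv : u ≠ v)
    (S : Finset (Fin n)) (hS : ∀ w ∈ S, w ≠ u ∧ w ≠ v) :
    erMeasure n p {ω | ∀ w ∈ S, ω s(u, w) = true → ω s(v, w) = true}
      = (1 - (p : ℝ≥0∞) * (1 - (p : ℝ≥0∞))) ^ S.card := by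
  classical
  set ν : Measure Bool := (PMF.bernoulli (min p 1) (min_le_right _ _)).toMeasure with hν
  have hmin : min p 1 = p := min_eq_left (by
    exact_mod_cast hp)
  have hT : ν {true} = (p : ℝ≥0∞) := by
    rw [hν, PMF.toMeasure_apply_singleton _ _ (measurableSet_singleton _),
      PMF.bernoulli_apply, hmin]
    rfl
  have hF : ν {false} = 1 - (p : ℝ≥0∞) := by
    rw [hν, PMF.toMeasure_apply_singleton _ _ (measurableSet_singleton _),
      PMF.bernoulli_apply, hmin]
    simp [ENNReal.coe_sub]
  have key := aux_iter ν (fun w : Fin n => s(u, w)) (fun w : Fin n => s(v, w)) S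
    ?_ ?_
  · rw [hT, hF] at key
    exact key
  · intro w hw w' hw' hww'
    obtain ⟨hwu, hwv⟩ := hS w hw
    obtain ⟨hwu', hwv'⟩ := hS w' hw'
    refine ⟨?_, ?_, ?_, ?_⟩ <;>
      · intro h
        rcases Sym2.eq_iff.mp h with ⟨h1, h2⟩ | ⟨h1, h2⟩ <;> subst_vars <;> simp_all
  · intro w hw
    obtain ⟨hwu, hwv⟩ := hS w hw
    intro h
    rcases Sym2.eq_iff.mp h with ⟨h1, h2⟩ | ⟨h1, h2⟩ <;> subst_vars <;> simp_all

lemma aux_chainReal (pp : ℝ) (hp0 : 0 ≤ pp) (hp1 : pp ≤ 1) (m : ℕ) (c : ℝ)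
    (hc0 : 0 ≤ c) (hcm : c ≤ m) :
    (1 - pp * (1 - pp)) ^ m ≤ Real.exp (-(pp * (1 - pp) * c)) := by
  set r := 1 - pp * (1 - pp) with hr
  have hr0 : 0 < r := by nlinarith
  have hr1 : r ≤ 1 := by nlinarith
  calc r ^ m = r ^ ((m : ℕ) : ℝ) := (Real.rpow_natCast r m).symm
    _ ≤ r ^ c := Real.rpow_le_rpow_of_exponent_ge hr0 hr1 hcm
    _ ≤ (Real.exp (-(pp * (1 - pp)))) ^ c := by
        apply Real.rpow_le_rpow hr0.le _ hc0
        nlinarith [Real.add_one_le_exp (-(pp * (1 - pp)))]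
    _ = Real.exp (-(pp * (1 - pp) * c)) := by
        rw [← Real.exp_mul]
        congr 1
        ring

lemma aux_toRealBound (p : ℝ≥0) (hp : p ≤ 1) (m : ℕ) :
    ((1 - (p : ℝ≥0∞) * (1 - (p : ℝ≥0∞))) ^ m).toReal
      = (1 - (p : ℝ) * (1 - (p : ℝ))) ^ m := by
  have hq1 : (p : ℝ≥0∞) ≤ 1 := by exact_mod_cast ENNReal.coe_le_one_iff.mpr hp
  have hprod : (p : ℝ≥0∞) * (1 - (p : ℝ≥0∞)) ≤ 1 := by
    calc (p : ℝ≥0∞) * (1 - (p : ℝ≥0∞)) ≤ 1 * 1 := mul_le_mul' hq1 tsub_le_self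
      _ = 1 := one_mul 1
  rw [ENNReal.toReal_pow, ENNReal.toReal_sub_of_le hprod ENNReal.one_ne_top,
    ENNReal.toReal_mul, ENNReal.toReal_sub_of_le hq1 ENNReal.one_ne_top]
  simp

lemma aux_gAsymp (lam : ℝ) (hlam0 : 0 < lam) (hlam1 : lam < 1)
    (p : ℕ → ℝ≥0)
    (hp0 : Tendsto (fun n : ℕ => (p n : ℝ)) atTop (nhds 0))
    (homega : (fun n : ℕ => Real.log n / n) =o[atTop] fun n : ℕ => (p n : ℝ)) :
    (fun n : ℕ =>
        Real.exp (-((p n : ℝ) * (1 - (p n : ℝ)) * max ((n : ℝ) - 2 * (n : ℝ) ^ lam) 0)))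
      =o[atTop] fun n : ℕ => (n : ℝ) ^ (-(2 : ℝ)) := by
  rw [isLittleO_iff_tendsto']
  swap
  · filter_upwards [eventually_ge_atTop 1] with n hn h
    have hpos : (0 : ℝ) < (n : ℝ) := by exact_mod_cast Nat.lt_of_lt_of_le Nat.zero_lt_one hn
    exact absurd h (Real.rpow_pos_of_pos hpos _).ne'
  set E : ℕ → ℝ := fun n =>
    -((p n : ℝ) * (1 - (p n : ℝ)) * max ((n : ℝ) - 2 * (n : ℝ) ^ lam) 0) + 2 * Real.log n
    with hE
  have hEq : (fun n : ℕ =>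
      Real.exp (-((p n : ℝ) * (1 - (p n : ℝ)) * max ((n : ℝ) - 2 * (n : ℝ) ^ lam) 0))
        / (n : ℝ) ^ (-(2 : ℝ))) =ᶠ[atTop] fun n => Real.exp (E n) := by
    filter_upwards [eventually_ge_atTop 1] with n hn
    have hpos : (0 : ℝ) < (n : ℝ) := by exact_mod_cast Nat.lt_of_lt_of_le Nat.zero_lt_one hn
    have hden : (n : ℝ) ^ (-(2 : ℝ)) = Real.exp (Real.log (n : ℝ) * (-(2 : ℝ))) :=
      Real.rpow_def_of_pos hpos _
    rw [hden, ← Real.exp_sub]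
    congr 1
    ring
  have hle : ∀ᶠ n in atTop, E n ≤ -Real.log n := by
    have h12 := homega.def (by norm_num : (0 : ℝ) < 1/12)
    have hhalf : ∀ᶠ n in atTop, (p n : ℝ) ≤ 1/2 :=
      hp0.eventually (eventually_le_nhds (by norm_num : (0:ℝ) < 1/2))
    have hrp : Tendsto (fun n : ℕ => (n : ℝ) ^ (lam - 1)) atTop (nhds 0) := by
      have := (tendsto_rpow_neg_atTop (by linarith : (0:ℝ) < 1 - lam)).comp
        tendsto_natCast_atTop_atTop
      simpa [neg_sub, Function.comp_def] using this
    have hrp4 : ∀ᶠ n : ℕ in atTop, (n : ℝ) ^ (lam - 1) ≤ 1/4 :=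
      hrp.eventually (eventually_le_nhds (by norm_num : (0:ℝ) < 1/4))
    filter_upwards [h12, hhalf, hrp4, eventually_ge_atTop 1] with n hn12 hnhalf hn4 hn1
    set x := ((p n : ℝ)) with hx
    set N := ((n : ℝ)) with hN
    have hN1 : (1 : ℝ) ≤ N := by rw [hN]; exact_mod_cast hn1
    have hNpos : (0 : ℝ) < N := by linarith
    have hx0 : 0 ≤ x := NNReal.coe_nonneg _
    have hL0 : 0 ≤ Real.log N := Real.log_nonneg hN1
    -- from the little-o bound
    have hLN : Real.log N / N ≤ (1/12) * x := by
      rw [Real.norm_eq_abs, Real.norm_eq_abs, abs_of_nonneg hx0] at hn12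
      exact (le_abs_self _).trans hn12
    have hL : 12 * Real.log N ≤ x * N := by
      have := mul_le_mul_of_nonneg_right hLN hNpos.le
      rw [div_mul_cancel₀ _ hNpos.ne'] at this
      nlinarith
    -- ball size bound
    have hNl : N ^ lam ≤ (1/4) * N := by
      have h1 : N ^ lam = N ^ (lam - 1) * N := by
        rw [Real.rpow_sub hNpos, Real.rpow_one]
        field_simp
      rw [h1]
      exact mul_le_mul_of_nonneg_right hn4 hNpos.le
    have hc : N / 2 ≤ max (N - 2 * N ^ lam) 0 := le_max_of_le_left (by linarith)
    have h1 : x / 2 ≤ x * (1 - x) := by nlinarith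
    have h2 : (x / 2) * (N / 2) ≤ (x * (1 - x)) * max (N - 2 * N ^ lam) 0 :=
      mul_le_mul h1 hc (by linarith) (by nlinarith)
    have h3 : 3 * Real.log N ≤ (x / 2) * (N / 2) := by nlinarith
    simp only [hE]
    nlinarith [h2, h3]
  have hEbot : Tendsto E atTop atBot := by
    refine tendsto_atBot_mono' atTop hle ?_
    exact tendsto_neg_atTop_atBot.comp (Real.tendsto_log_atTop.comp tendsto_natCast_atTop_atTop)
  exact Tendsto.congr' hEq.symm (Real.tendsto_exp_atBot.comp hEbot)

lemma aux_perN (lam : ℝ) (n : ℕ) (G1 : SimpleGraph (Fin n))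
    (hG1 : ∀ v : Fin n, ((ball G1 v 2).ncard : ℝ) ≤ (n : ℝ) ^ lam)
    (p : ℝ≥0) (hp1 : p ≤ 1) (u v : Fin n) (huv : u ≠ v)
    (A : Set (Sym2 (Fin n) → Bool))
    (hA : ∀ ω ∈ A, ∀ w : Fin n, w ≠ u → w ≠ v → ¬G1.Adj u w → ¬G1.Adj v w →
        ω s(u, w) = true → ω s(v, w) = true) :
    (erMeasure n p A).toReal ≤
      Real.exp (-((p : ℝ) * (1 - (p : ℝ)) * max ((n : ℝ) - 2 * (n : ℝ) ^ lam) 0)) := by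
  classical
  set S : Finset (Fin n) :=
    Finset.univ.filter (fun w => w ≠ u ∧ w ≠ v ∧ ¬G1.Adj u w ∧ ¬G1.Adj v w) with hSdef
  have hSmem : ∀ w ∈ S, w ≠ u ∧ w ≠ v ∧ ¬G1.Adj u w ∧ ¬G1.Adj v w := by
    intro w hw
    simpa [hSdef] using (Finset.mem_filter.mp hw).2
  have hsub : A ⊆ {ω | ∀ w ∈ S, ω s(u, w) = true → ω s(v, w) = true} := by
    intro ω hω w hw ht
    obtain ⟨h1, h2, h3, h4⟩ := hSmem w hw
    exact hA ω hω w h1 h2 h3 h4 ht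
  have hle1 : erMeasure n p A ≤ (1 - (p : ℝ≥0∞) * (1 - (p : ℝ≥0∞))) ^ S.card :=
    (measure_mono hsub).trans_eq
      (aux_mainBound n p hp1 huv S (fun w hw => ⟨(hSmem w hw).1, (hSmem w hw).2.1⟩))
  have hfin : (1 - (p : ℝ≥0∞) * (1 - (p : ℝ≥0∞))) ^ S.card ≠ ∞ :=
    ENNReal.pow_ne_top ((tsub_le_self.trans_lt ENNReal.one_lt_top).ne)
  have hstep1 : (erMeasure n p A).toReal ≤ (1 - (p : ℝ) * (1 - (p : ℝ))) ^ S.card := by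
    rw [← aux_toRealBound p hp1 S.card]
    exact ENNReal.toReal_mono hfin hle1
  -- cardinality bound
  have hcompl : ∀ w : Fin n, w ∉ S → w ∈ ball G1 u 2 ∪ ball G1 v 2 := by
    intro w hw
    have : ¬(w ≠ u ∧ w ≠ v ∧ ¬G1.Adj u w ∧ ¬G1.Adj v w) := by
      intro h
      exact hw (by simp [hSdef, h])
    by_cases h1 : w = u
    · subst h1; exact Or.inl ⟨SimpleGraph.Walk.nil, by norm_num⟩
    by_cases h2 : w = v
    · subst h2; exact Or.inr ⟨SimpleGraph.Walk.nil, by norm_num⟩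
    by_cases h3 : G1.Adj u w
    · exact Or.inl ⟨SimpleGraph.Walk.cons h3 SimpleGraph.Walk.nil, by simp⟩
    by_cases h4 : G1.Adj v w
    · exact Or.inr ⟨SimpleGraph.Walk.cons h4 SimpleGraph.Walk.nil, by simp⟩
    exact absurd ⟨h1, h2, h3, h4⟩ this
  have hcardc : (((Finset.univ \ S) : Finset (Fin n)).card : ℝ) ≤ 2 * (n : ℝ) ^ lam := by
    have hsub2 : (((Finset.univ \ S) : Finset (Fin n)) : Set (Fin n))
        ⊆ ball G1 u 2 ∪ ball G1 v 2 := by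
      intro w hw
      simp only [Finset.coe_sdiff, Set.mem_diff, Finset.mem_coe] at hw
      exact hcompl w hw.2
    have hle2 : (((Finset.univ \ S) : Finset (Fin n)) : Set (Fin n)).ncard
        ≤ (ball G1 u 2).ncard + (ball G1 v 2).ncard :=
      le_trans (Set.ncard_le_ncard hsub2 (Set.toFinite _)) (Set.ncard_union_le _ _)
    have := hG1 u
    have := hG1 v
    have hcoe : (((Finset.univ \ S) : Finset (Fin n)) : Set (Fin n)).ncard
        = ((Finset.univ \ S) : Finset (Fin n)).card := Set.ncard_coe_finset _
    have hcast : (((Finset.univ \ S) : Finset (Fin n)).card : ℝ)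
        ≤ ((ball G1 u 2).ncard : ℝ) + ((ball G1 v 2).ncard : ℝ) := by
      rw [← hcoe]
      exact_mod_cast hle2
    linarith
  have hcards : ((Finset.univ \ S) : Finset (Fin n)).card + S.card = n := by
    rw [Finset.card_sdiff_add_card_eq_card (Finset.subset_univ S), Finset.card_univ,
      Fintype.card_fin]
  have hScard : (n : ℝ) - 2 * (n : ℝ) ^ lam ≤ (S.card : ℝ) := by
    have : ((Finset.univ \ S) : Finset (Fin n)).card + (S.card : ℝ) = n := by
      exact_mod_cast hcards
    linarith
  have hcm : max ((n : ℝ) - 2 * (n : ℝ) ^ lam) 0 ≤ (S.card : ℝ) :=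
    max_le hScard (Nat.cast_nonneg _)
  exact hstep1.trans (aux_chainReal (p : ℝ) (NNReal.coe_nonneg _) (by exact_mod_cast hp1)
    S.card _ (le_max_right _ _) hcm)

/-- Let `λ ∈ (0,1)`. For each `n` let `G1 n` be a graph on `[n]` all of
whose 2-neighborhoods have at most `n^λ` vertices, and let `G2 ~ G(n, pₙ)` with `pₙ → 0`
and `pₙ = ω(log(n)/n)`. Then, uniformly over pairs of distinct vertices `u, v`, the
probability that `N(u) \ (N(v) ∪ {v}) = ∅` (neighborhoods in the union of `G1` and `G2`)
is `o(n^{−2})`; the same holds for the XOR of `G1` and `G2`. -/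
theorem neighborhood_difference_nonempty
    (lam : ℝ) (hlam0 : 0 < lam) (hlam1 : lam < 1)
    (G1 : ∀ n : ℕ, SimpleGraph (Fin n))
    (hG1 : ∀ n : ℕ, ∀ v : Fin n, ((ball (G1 n) v 2).ncard : ℝ) ≤ (n : ℝ) ^ lam)
    (p : ℕ → ℝ≥0) (hp1 : ∀ n, p n ≤ 1)
    (hp0 : Tendsto (fun n : ℕ => (p n : ℝ)) atTop (nhds 0))
    (homega : (fun n : ℕ => Real.log n / n) =o[atTop] fun n : ℕ => (p n : ℝ)) :
    (∃ g : ℕ → ℝ, (g =o[atTop] fun n : ℕ => (n : ℝ) ^ (-(2 : ℝ))) ∧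
      ∀ (n : ℕ) (u v : Fin n), u ≠ v →
        (erMeasure n (p n)
          {ω | (G1 n ⊔ graphOfFn ω).neighborSet u \
              ((G1 n ⊔ graphOfFn ω).neighborSet v ∪ {v}) = ∅}).toReal ≤ g n) ∧
    (∃ g : ℕ → ℝ, (g =o[atTop] fun n : ℕ => (n : ℝ) ^ (-(2 : ℝ))) ∧
      ∀ (n : ℕ) (u v : Fin n), u ≠ v →
        (erMeasure n (p n)
          {ω | (sgXor (G1 n) (graphOfFn ω)).neighborSet u \
              ((sgXor (G1 n) (graphOfFn ω)).neighborSet v ∪ {v}) = ∅}).toReal ≤ g n) := by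
  set g : ℕ → ℝ := fun n =>
    Real.exp (-((p n : ℝ) * (1 - (p n : ℝ)) * max ((n : ℝ) - 2 * (n : ℝ) ^ lam) 0)) with hg
  have hgo : g =o[atTop] fun n : ℕ => (n : ℝ) ^ (-(2 : ℝ)) :=
    aux_gAsymp lam hlam0 hlam1 p hp0 homega
  constructor
  · refine ⟨g, hgo, ?_⟩
    intro n u v huv
    refine aux_perN lam n (G1 n) (hG1 n) (p n) (hp1 n) u v huv _ ?_
    intro ω hω w hwu hwv hau hav ht
    have hdiff := Set.diff_eq_empty.mp hω
    have hadj : (G1 n ⊔ graphOfFn ω).Adj u w :=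
      (SimpleGraph.sup_adj _ _ _ _).mpr (Or.inr ⟨hwu.symm, ht⟩)
    have hmem := hdiff (SimpleGraph.mem_neighborSet _ _ _ |>.mpr hadj)
    rcases hmem with hv | hv
    · rcases (SimpleGraph.sup_adj _ _ _ _).mp (SimpleGraph.mem_neighborSet _ _ _ |>.mp hv)
        with h | h
      · exact absurd h hav
      · exact h.2
    · exact absurd (Set.mem_singleton_iff.mp hv) hwv
  · refine ⟨g, hgo, ?_⟩
    intro n u v huv
    refine aux_perN lam n (G1 n) (hG1 n) (p n) (hp1 n) u v huv _ ?_
    intro ω hω w hwu hwv hau hav ht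
    have hdiff := Set.diff_eq_empty.mp hω
    have hadj : (sgXor (G1 n) (graphOfFn ω)).Adj u w :=
      (SimpleGraph.sup_adj _ _ _ _).mpr (Or.inr ⟨⟨hwu.symm, ht⟩, hau⟩)
    have hmem := hdiff (SimpleGraph.mem_neighborSet _ _ _ |>.mpr hadj)
    rcases hmem with hv | hv
    · rcases (SimpleGraph.sup_adj _ _ _ _).mp (SimpleGraph.mem_neighborSet _ _ _ |>.mp hv)
        with h | h
      · exact absurd h.1 hav
      · exact h.1.2
    · exact absurd (Set.mem_singleton_iff.mp hv) hwv
end
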